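/- arXiv:0707.0077 — 9 statements merged into one kernel-verified Lean document; each statement's English description precedes it below -/
import Mathlib

section
/- For every integer n ≥ 1 and every real α ≥ 1, one has (α/(α+1)) · n^α (n+1)^α / ((n+1)^α − n^α) ≤ ∑_{i=1}^n i^α. -/
open Real

lemma hda_one_add (p x : ℝ) (h : (0:ℝ) < 1 + x) :
    HasDerivAt (fun y : ℝ => (1 + y) ^ p) (p * (1 + x) ^ (p - 1)) x := by
  have h1 : HasDerivAt (fun y : ℝ => 1 + y) 1 x := by
    simpa using (hasDerivAt_id x).const_add (1:ℝ)
  have := (Real.hasDerivAt_rpow_const (x := 1 + x) (p := p) (Or.inl h.ne')).comp x h1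
  simpa [Function.comp_def] using this

lemma hda_one_sub (p x : ℝ) (h : (0:ℝ) < 1 - x) :
    HasDerivAt (fun y : ℝ => (1 - y) ^ p) (-(p * (1 - x) ^ (p - 1))) x := by
  have h1 : HasDerivAt (fun y : ℝ => 1 - y) (-1) x := by
    simpa using (hasDerivAt_id x).const_sub (1:ℝ)
  have := (Real.hasDerivAt_rpow_const (x := 1 - x) (p := p) (Or.inl h.ne')).comp x h1
  simpa [Function.comp_def] using this

lemma hda_one_sub_sq (p x : ℝ) (h : (0:ℝ) < 1 - x^2) :
    HasDerivAt (fun y : ℝ => (1 - y^2) ^ p) (p * (1 - x^2) ^ (p - 1) * (-(2*x))) x := by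
  have h1 : HasDerivAt (fun y : ℝ => 1 - y^2) (-(2*x)) x := by
    have := (hasDerivAt_pow 2 x).const_sub (1:ℝ)
    simpa [mul_comm] using this
  exact (Real.hasDerivAt_rpow_const (x := 1 - x^2) (p := p) (Or.inl h.ne')).comp x h1

-- midpoint convexity consequence: (1+y)^q + (1-y)^q ≥ 2*(1-y^2)^p when q ≤ 2p... we need
-- (1+y)^(β-1) + (1-y)^(β-1) ≥ 2*(1-y^2)^β  for 0 ≤ y < 1, 0 ≤ β
lemma amgm_aux {β y : ℝ} (hβ : 0 ≤ β) (hy0 : 0 ≤ y) (hy1 : y < 1) :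
    2 * (1 - y^2)^β ≤ (1+y)^(β-1) + (1-y)^(β-1) := by
  have h1 : (0:ℝ) < 1 + y := by linarith
  have h2 : (0:ℝ) < 1 - y := by linarith
  have h3 : (0:ℝ) < 1 - y^2 := by nlinarith
  set a := (1+y)^(β-1) with ha
  set b := (1-y)^(β-1) with hb
  have hapos : 0 < a := rpow_pos_of_pos h1 _
  have hbpos : 0 < b := rpow_pos_of_pos h2 _
  have hab : a * b = (1 - y^2)^(β-1) := by
    rw [ha, hb, ← Real.mul_rpow h1.le h2.le]
    ring_nf
  have hsq : 2 * Real.sqrt (a*b) ≤ a + b := by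
    have h := sq_nonneg (Real.sqrt a - Real.sqrt b)
    rw [sub_sq, Real.sq_sqrt hapos.le, Real.sq_sqrt hbpos.le] at h
    rw [Real.sqrt_mul hapos.le]
    linarith
  have hs : Real.sqrt (a*b) = (1 - y^2)^((β-1)/2) := by
    rw [hab, Real.sqrt_eq_rpow, ← Real.rpow_mul h3.le]
    ring_nf
  have hexp : (1 - y^2)^β ≤ (1 - y^2)^((β-1)/2) := by
    apply Real.rpow_le_rpow_of_exponent_ge h3 (by nlinarith) (by linarith)
  rw [hs] at hsq
  linarith

lemma psi_hda (β x : ℝ) (h1 : (0:ℝ) < 1 + x) (h2 : (0:ℝ) < 1 - x) (h3 : (0:ℝ) < 1 - x^2) :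
    HasDerivAt (fun y : ℝ => (1+y)^β - (1-y)^β - 2*β*y*(1-y^2)^β)
      (β*(1+x)^(β-1) - (-(β*(1-x)^(β-1))) -
        (2*β*(1-x^2)^β + 2*β*x*(β*(1-x^2)^(β-1)*(-(2*x))))) x := by
  have ha := hda_one_add β x h1
  have hb := hda_one_sub β x h2
  have hc := hda_one_sub_sq β x h3
  have hlin : HasDerivAt (fun y : ℝ => 2*β*y) (2*β) x := by
    simpa using (hasDerivAt_id x).const_mul (2*β)
  exact (ha.sub hb).sub (hlin.mul hc)

lemma psi_nonneg {β x : ℝ} (hβ : 0 ≤ β) (hx0 : 0 ≤ x) (hx1 : x < 1) :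
    2*β*x*(1-x^2)^β ≤ (1+x)^β - (1-x)^β := by
  set ψ : ℝ → ℝ := fun y => (1+y)^β - (1-y)^β - 2*β*y*(1-y^2)^β with hψ
  have key : ∀ y ∈ Set.Icc (0:ℝ) x, ψ 0 ≤ ψ y := by
    intro y hy
    have hmono : MonotoneOn ψ (Set.Icc (0:ℝ) x) := by
      apply monotoneOn_of_deriv_nonneg (convex_Icc 0 x)
      · apply ContinuousOn.sub (ContinuousOn.sub ?_ ?_) ?_
        · exact fun z hz => ((hda_one_add β z (by cases hz with
            | intro a b => linarith)).continuousAt).continuousWithinAt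
        · exact fun z hz => ((hda_one_sub β z (by cases hz with
            | intro a b => linarith)).continuousAt).continuousWithinAt
        · exact fun z hz => by
            have h3 : (0:ℝ) < 1 - z^2 := by cases hz with | intro a b => nlinarith
            have hlin : HasDerivAt (fun y : ℝ => 2*β*y) (2*β) z := by
              simpa using (hasDerivAt_id z).const_mul (2*β)
            exact ((hlin.mul (hda_one_sub_sq β z h3)).continuousAt).continuousWithinAt
      · intro z hz
        rw [interior_Icc] at hz
        obtain ⟨hz0, hzx⟩ := hz
        have h1 : (0:ℝ) < 1 + z := by linarith
        have h2 : (0:ℝ) < 1 - z := by linarith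
        have h3 : (0:ℝ) < 1 - z^2 := by nlinarith
        exact (psi_hda β z h1 h2 h3).differentiableAt.differentiableWithinAt
      · intro z hz
        rw [interior_Icc] at hz
        obtain ⟨hz0, hzx⟩ := hz
        have h1 : (0:ℝ) < 1 + z := by linarith
        have h2 : (0:ℝ) < 1 - z := by linarith
        have h3 : (0:ℝ) < 1 - z^2 := by nlinarith
        rw [(psi_hda β z h1 h2 h3).deriv]
        have hm := amgm_aux hβ hz0.le (by linarith : z < 1)
        have t1 : 0 ≤ (1-z^2)^(β-1) := (rpow_pos_of_pos h3 _).le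
        nlinarith [mul_le_mul_of_nonneg_left hm hβ, mul_nonneg (mul_nonneg hβ (sq_nonneg z)) t1,
          mul_nonneg hβ t1]
    exact hmono (Set.mem_Icc.2 ⟨le_refl 0, hx0⟩) hy hy.1
  have h0 : ψ 0 = 0 := by simp [hψ]
  have := key x (Set.mem_Icc.2 ⟨hx0, le_refl x⟩)
  rw [h0] at this
  simp only [hψ] at this
  linarith

lemma f_hda (α x : ℝ) (h1 : (0:ℝ) < 1 + x) (h2 : (0:ℝ) < 1 - x) (h3 : (0:ℝ) < 1 - x^2) :
    HasDerivAt (fun y : ℝ => (1+y)^α + (1-y)^α + (α-1)*(1-y^2)^α)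
      (α*(1+x)^(α-1) + (-(α*(1-x)^(α-1))) + (α-1)*(α*(1-x^2)^(α-1)*(-(2*x)))) x := by
  exact ((hda_one_add α x h1).add (hda_one_sub α x h2)).add
    ((hda_one_sub_sq α x h3).const_mul (α-1))

lemma f_lower {α x : ℝ} (hα : 1 ≤ α) (hx0 : 0 ≤ x) (hx1 : x < 1) :
    α + 1 ≤ (1+x)^α + (1-x)^α + (α-1)*(1-x^2)^α := by
  set f : ℝ → ℝ := fun y => (1+y)^α + (1-y)^α + (α-1)*(1-y^2)^α with hf
  have hmono : MonotoneOn f (Set.Icc (0:ℝ) x) := by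
    apply monotoneOn_of_deriv_nonneg (convex_Icc 0 x)
    · apply ContinuousOn.add (ContinuousOn.add ?_ ?_) ?_
      · exact fun z hz => ((hda_one_add α z (by cases hz with
          | intro a b => linarith)).continuousAt).continuousWithinAt
      · exact fun z hz => ((hda_one_sub α z (by cases hz with
          | intro a b => linarith)).continuousAt).continuousWithinAt
      · exact fun z hz => by
          have h3 : (0:ℝ) < 1 - z^2 := by cases hz with | intro a b => nlinarith
          exact (((hda_one_sub_sq α z h3).const_mul (α-1)).continuousAt).continuousWithinAt
    · intro z hz
      rw [interior_Icc] at hz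
      obtain ⟨hz0, hzx⟩ := hz
      have h1 : (0:ℝ) < 1 + z := by linarith
      have h2 : (0:ℝ) < 1 - z := by linarith
      have h3 : (0:ℝ) < 1 - z^2 := by nlinarith
      exact (f_hda α z h1 h2 h3).differentiableAt.differentiableWithinAt
    · intro z hz
      rw [interior_Icc] at hz
      obtain ⟨hz0, hzx⟩ := hz
      have h1 : (0:ℝ) < 1 + z := by linarith
      have h2 : (0:ℝ) < 1 - z := by linarith
      have h3 : (0:ℝ) < 1 - z^2 := by nlinarith
      rw [(f_hda α z h1 h2 h3).deriv]
      have hp := psi_nonneg (by linarith : (0:ℝ) ≤ α - 1) hz0.le (by linarith : z < 1)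
      nlinarith [mul_le_mul_of_nonneg_left hp (by linarith : (0:ℝ) ≤ α)]
  have h0 : f 0 = α + 1 := by simp [hf]; ring
  have := hmono (Set.mem_Icc.2 ⟨le_refl 0, hx0⟩) (Set.mem_Icc.2 ⟨hx0, le_refl x⟩) hx0
  rw [h0] at this
  exact this

lemma key_ineq {α a : ℝ} (hα : 1 ≤ α) (ha : 1 ≤ a) :
    (α+1)*((a+1)^α)^2 + (1-α)*(a^α*(a+2)^α) ≤ (a+1)^α*(a^α + (a+2)^α) := by
  set m : ℝ := a + 1 with hm
  have hm2 : 2 ≤ m := by linarith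
  have hmpos : (0:ℝ) < m := by linarith
  set x : ℝ := 1/m with hx
  have hx0 : 0 < x := by positivity
  have hx1 : x < 1 := by rw [hx]; rw [div_lt_one hmpos]; linarith
  have hea : a = m*(1-x) := by rw [hx]; field_simp; linarith
  have hec : a + 2 = m*(1+x) := by rw [hx]; field_simp; ring
  have hA : a^α = m^α * (1-x)^α := by
    rw [hea, Real.mul_rpow hmpos.le (by linarith)]
  have hC : (a+2)^α = m^α * (1+x)^α := by
    rw [hec, Real.mul_rpow hmpos.le (by linarith)]
  have hPQ : (1-x)^α * (1+x)^α = (1-x^2)^α := by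
    rw [← Real.mul_rpow (by linarith) (by linarith)]
    ring_nf
  have hf := f_lower hα hx0.le hx1
  have hMpos : (0:ℝ) < m^α := rpow_pos_of_pos hmpos α
  rw [hA, hC]
  have hM2 : 0 ≤ m^α * m^α := by positivity
  rw [← hPQ] at hf
  nlinarith [mul_le_mul_of_nonneg_left hf hM2]

lemma step_ineq {α a : ℝ} (hα : 1 ≤ α) (ha : 1 ≤ a) :
    α/(α+1) * ((a+1)^α*(a+2)^α/((a+2)^α-(a+1)^α))
      ≤ α/(α+1) * (a^α*(a+1)^α/((a+1)^α-a^α)) + (a+1)^α := by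
  set A := a^α with hA
  set B := (a+1)^α with hB
  set C := (a+2)^α with hC
  have hApos : 0 < A := rpow_pos_of_pos (by linarith) α
  have hAB : A < B := Real.rpow_lt_rpow (by linarith) (by linarith) (by linarith)
  have hBC : B < C := Real.rpow_lt_rpow (by linarith) (by linarith) (by linarith)
  have hd1 : 0 < B - A := by linarith
  have hd2 : 0 < C - B := by linarith
  have hα1 : (0:ℝ) < α + 1 := by linarith
  have key := key_ineq hα ha
  rw [div_mul_div_comm, div_mul_div_comm, div_add' _ _ _ (by positivity : ((α+1)*(B-A)) ≠ 0),
    div_le_div_iff₀ (by positivity) (by positivity)]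
  nlinarith [mul_nonneg (mul_nonneg hα1.le (by positivity : (0:ℝ) ≤ B))
      (sub_nonneg.2 key), mul_pos hd1 hd2]


theorem power_sum_lower_bound (n : ℕ) (hn : 1 ≤ n) (α : ℝ) (hα : 1 ≤ α) :
    α / (α + 1) * ((n : ℝ) ^ α * ((n : ℝ) + 1) ^ α / (((n : ℝ) + 1) ^ α - (n : ℝ) ^ α))
      ≤ ∑ i ∈ Finset.Icc 1 n, (i : ℝ) ^ α := by
  induction n, hn using Nat.le_induction with
  | base =>
    have h2 : α + 1 ≤ (2:ℝ)^α := by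
      have := one_add_mul_self_le_rpow_one_add (by norm_num : (-1:ℝ) ≤ 1) hα
      norm_num at this
      linarith
    have hpos : (0:ℝ) < (2:ℝ)^α - 1 := by linarith
    have hα1 : (0:ℝ) < α + 1 := by linarith
    simp only [Finset.Icc_self, Finset.sum_singleton, Nat.cast_one, Real.one_rpow]
    norm_num
    rw [div_mul_div_comm, div_le_one (by positivity)]
    nlinarith [h2]
  | succ n hn ih =>
    have hstep := step_ineq hα (by exact_mod_cast hn : (1:ℝ) ≤ (n:ℝ))
    rw [Finset.sum_Icc_succ_top (by omega : 1 ≤ n + 1)]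
    push_cast
    have e1 : ((n:ℝ) + 1) + 1 = (n:ℝ) + 2 := by ring
    rw [e1]
    calc α / (α + 1) * (((n:ℝ)+1) ^ α * ((n:ℝ)+2) ^ α / (((n:ℝ)+2) ^ α - ((n:ℝ)+1) ^ α))
        ≤ α/(α+1) * ((n:ℝ)^α*((n:ℝ)+1)^α/(((n:ℝ)+1)^α-(n:ℝ)^α)) + ((n:ℝ)+1)^α := hstep
      _ ≤ (∑ i ∈ Finset.Icc 1 n, (i : ℝ) ^ α) + ((n:ℝ)+1)^α := by linarith [ih]
end

section
/- For every real α ≥ 1 and integer n ≥ 1, ∑_{i=1}^n i^α ≤ (α/(α+1)) · (n+1)^{2α} / ((n+2)^α − (n+1)^α). -/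
open Real Finset

set_option maxHeartbeats 1000000

private lemma psus_key (α x : ℝ) (hα : 1 ≤ α) (hx : 1 ≤ x) :
    x ^ α * ((α + 1) * (x + 1) ^ α - x ^ α) * ((x + 2) ^ α - (x + 1) ^ α)
      ≤ α * ((x + 1) ^ α) ^ 2 * ((x + 1) ^ α - x ^ α) := by
  have hx0 : (0:ℝ) < x := lt_of_lt_of_le one_pos hx
  have hx1 : (0:ℝ) < x + 1 := by linarith
  have hx2 : (0:ℝ) < x + 2 := by linarith
  set a := x ^ α with ha_def
  set b := (x + 1) ^ α with hb_def
  set c := (x + 2) ^ α with hc_def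
  have ha : 0 < a := rpow_pos_of_pos hx0 _
  have hb : 0 < b := rpow_pos_of_pos hx1 _
  have hc : 0 < c := rpow_pos_of_pos hx2 _
  set w := 1 / (x + 1) with hw_def
  have hw : 0 < w := by rw [hw_def]; positivity
  have hw1 : w ≤ 1 := by rw [hw_def, div_le_one hx1]; linarith
  have hα0 : (0:ℝ) < α := by linarith
  have h1w : 0 ≤ 1 - w := by linarith
  have hw2 : w^2 ≤ 1 := by nlinarith
  have h1w2 : 0 ≤ 1 - w^2 := by linarith
  -- h2 : b - a ≤ α * b * w
  have hber : 1 - α * w ≤ (1 - w) ^ α := by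
    have h := one_add_mul_self_le_rpow_one_add (s := -w) (by linarith) hα
    have e1 : (1 : ℝ) + -w = 1 - w := by ring
    have e2 : (1 : ℝ) + α * -w = 1 - α * w := by ring
    rwa [e1, e2] at h
  have hab : b * (1 - w) ^ α = a := by
    rw [ha_def, hb_def, ← Real.mul_rpow hx1.le h1w]
    congr 1
    rw [hw_def]
    field_simp
    ring
  have h2 : b - a ≤ α * b * w := by
    have h := mul_le_mul_of_nonneg_left hber hb.le
    rw [hab] at h
    nlinarith [h]
  -- h1 : a * c * (1 + α * w^2) ≤ b^2
  have hmul : x * (x + 2) = (x + 1)^2 * (1 - w^2) := by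
    rw [hw_def]
    field_simp
    ring
  have hb2 : b ^ 2 = ((x+1)^2) ^ α := by
    rw [hb_def, ← Real.rpow_natCast ((x+1)^α) 2, ← Real.rpow_natCast (x+1) 2,
        ← Real.rpow_mul hx1.le, ← Real.rpow_mul hx1.le]
    norm_num [mul_comm]
  have hsq : (0:ℝ) ≤ (x+1)^2 := by positivity
  have hac : a * c = b ^ 2 * (1 - w^2) ^ α := by
    rw [ha_def, hc_def, ← Real.mul_rpow hx0.le hx2.le, hmul,
        Real.mul_rpow hsq h1w2, hb2]
  have hber2 : 1 + α * w^2 ≤ (1 + w^2) ^ α :=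
    one_add_mul_self_le_rpow_one_add (by nlinarith [sq_nonneg w]) hα
  have hsmall : (1 - w^2) ^ α * (1 + w^2) ^ α ≤ 1 := by
    rw [← Real.mul_rpow h1w2 (by positivity)]
    exact Real.rpow_le_one (by nlinarith) (by nlinarith) (by linarith)
  have h1 : a * c * (1 + α * w^2) ≤ b^2 := by
    calc a * c * (1 + α * w^2) = b^2 * ((1 - w^2)^α * (1 + α*w^2)) := by rw [hac]; ring
    _ ≤ b^2 * ((1 - w^2)^α * (1 + w^2)^α) := by
        apply mul_le_mul_of_nonneg_left _ (by positivity)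
        exact mul_le_mul_of_nonneg_left hber2 (Real.rpow_nonneg h1w2 _)
    _ ≤ b^2 * 1 := mul_le_mul_of_nonneg_left hsmall (by positivity)
    _ = b^2 := mul_one _
  have hba : a ≤ b := Real.rpow_le_rpow hx0.le (by linarith) (by linarith)
  -- assembling
  have hq : 0 ≤ (α+1)*b - a := by nlinarith
  have hD : a * (c - b) * (1 + α * w^2) ≤ b * (b - a) - α * w^2 * (a * b) := by
    nlinarith [h1]
  have h2sq : (b - a)^2 ≤ (α*b*w)^2 := by nlinarith [h2, hba]
  have key2 : ((α+1)*b - a) * (b*(b-a) - α*w^2*(a*b)) ≤ α * b^2 * (b - a) * (1 + α*w^2) := by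
    nlinarith [mul_le_mul_of_nonneg_left h2sq hb.le,
      mul_nonneg (mul_nonneg (mul_nonneg hα0.le (sq_nonneg w)) (mul_nonneg ha.le hb.le))
        (sub_nonneg.2 hba)]
  have hmid := mul_le_mul_of_nonneg_left hD hq
  have hpos : (0:ℝ) < 1 + α * w^2 := by positivity
  have hfin : a * ((α+1)*b - a) * (c - b) * (1 + α*w^2)
      ≤ α * b^2 * (b - a) * (1 + α*w^2) := by nlinarith [hmid, key2]
  exact le_of_mul_le_mul_right hfin hpos

private lemma psus_den_pos (α : ℝ) (hα : 1 ≤ α) {u v : ℝ} (hu : 0 ≤ u) (huv : u < v) :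
    (0:ℝ) < v ^ α - u ^ α :=
  sub_pos.2 (Real.rpow_lt_rpow hu huv (by linarith))

private lemma psus_step (α x : ℝ) (hα : 1 ≤ α) (hx : 1 ≤ x) :
    α / (α + 1) * (x ^ (2*α) / ((x+1) ^ α - x ^ α)) + x ^ α
      ≤ α / (α + 1) * ((x+1) ^ (2*α) / ((x+2) ^ α - (x+1) ^ α)) := by
  have hx0 : (0:ℝ) < x := lt_of_lt_of_le one_pos hx
  have hxp1 : (0:ℝ) < x + 1 := by linarith
  have key := psus_key α x hα hx
  set a := x ^ α with ha_def
  set b := (x + 1) ^ α with hb_def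
  set c := (x + 2) ^ α with hc_def
  have d1 : 0 < b - a := psus_den_pos α hα hx0.le (by linarith)
  have d2 : 0 < c - b := psus_den_pos α hα hxp1.le (by linarith)
  have hα1 : (0:ℝ) < α + 1 := by linarith
  have hxa2 : x ^ (2*α) = a^2 := by
    rw [ha_def, ← Real.rpow_natCast (x^α) 2, ← Real.rpow_mul hx0.le]
    norm_num [mul_comm]
  have hxb2 : (x+1) ^ (2*α) = b^2 := by
    rw [hb_def, ← Real.rpow_natCast ((x+1)^α) 2, ← Real.rpow_mul hxp1.le]
    norm_num [mul_comm]
  rw [hxa2, hxb2, ← sub_nonneg]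
  have expand : α / (α + 1) * (b^2 / (c - b)) - (α / (α + 1) * (a^2 / (b - a)) + a)
      = (α * b^2 * (b - a) - α * a^2 * (c - b) - (α+1) * a * (b - a) * (c - b))
        / ((α + 1) * (b - a) * (c - b)) := by
    field_simp
    ring
  rw [expand]
  apply div_nonneg
  · nlinarith [key]
  · positivity

private lemma psus_main (α : ℝ) (hα : 1 ≤ α) : ∀ m : ℕ,
    ∑ i ∈ Finset.Icc 1 m, (i : ℝ) ^ α
      ≤ α / (α + 1) * (((m : ℝ) + 1) ^ (2 * α) / (((m : ℝ) + 2) ^ α - ((m : ℝ) + 1) ^ α)) := by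
  intro m
  induction m with
  | zero =>
      simp only [Nat.cast_zero, zero_add]
      rw [show (Finset.Icc 1 0 : Finset ℕ) = ∅ from Finset.Icc_eq_empty (by omega),
        Finset.sum_empty]
      have hden : (0:ℝ) < (2:ℝ) ^ α - 1 ^ α := psus_den_pos α hα zero_le_one one_lt_two
      have h1 : (0:ℝ) ≤ (1:ℝ) ^ (2*α) := Real.rpow_nonneg zero_le_one _
      have hαα : (0:ℝ) ≤ α / (α + 1) := by
        apply div_nonneg <;> linarith
      exact mul_nonneg hαα (div_nonneg h1 hden.le)
  | succ m ih =>
      have hm0 : (0:ℝ) ≤ (m:ℝ) := Nat.cast_nonneg m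
      have hx1 : (1:ℝ) ≤ (m:ℝ) + 1 := by linarith
      have hstep := psus_step α ((m:ℝ)+1) hα hx1
      rw [show (m:ℝ)+1+1 = (m:ℝ)+2 by ring, show (m:ℝ)+1+2 = (m:ℝ)+3 by ring] at hstep
      have hsum : ∑ i ∈ Finset.Icc 1 (m+1), (i : ℝ) ^ α
          = (∑ i ∈ Finset.Icc 1 m, (i : ℝ) ^ α) + ((m:ℝ)+1) ^ α := by
        rw [Finset.sum_Icc_succ_top (by omega)]
        push_cast
        ring_nf
      have hc1 : ((m+1 : ℕ) : ℝ) + 1 = (m:ℝ) + 2 := by push_cast; ring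
      have hc2 : ((m+1 : ℕ) : ℝ) + 2 = (m:ℝ) + 3 := by push_cast; ring
      rw [hsum, hc1, hc2]
      linarith [ih, hstep]

theorem power_sum_upper_bound_shifted (α : ℝ) (hα : 1 ≤ α) (n : ℕ) (hn : 1 ≤ n) :
    ∑ i ∈ Finset.Icc 1 n, (i : ℝ) ^ α
      ≤ α / (α + 1) * (((n : ℝ) + 1) ^ (2 * α) / (((n : ℝ) + 2) ^ α - ((n : ℝ) + 1) ^ α)) := by
  exact psus_main α hα n
end

section
/- For every real α ≥ 1 and integer n ≥ 1, with Λ_n = ∑_{i=1}^n i^α, one has Λ_{n+1}/(n+1)^α − Λ_n/n^α ≤ 1/(α+1). -/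
open Real Set

private lemma aux_g_lrdu (β : ℝ) (hβ : 0 ≤ β) (t : ℝ) (ht0 : 0 ≤ t) (ht1 : t < 1) :
    2 * β * t ≤ (1 - t) ^ (-β) - (1 + t) ^ (-β) := by
  set g : ℝ → ℝ := fun x => (1 - x) ^ (-β) - (1 + x) ^ (-β) - 2 * β * x with hgdef
  have hder : ∀ x ∈ Icc (0:ℝ) t, HasDerivAt g
      (β * (1 - x) ^ (-β - 1) + β * (1 + x) ^ (-β - 1) - 2 * β) x := by
    intro x hx
    have h1 : (0:ℝ) < 1 - x := by have := hx.2; linarith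
    have h2 : (0:ℝ) < 1 + x := by have := hx.1; linarith
    have d1 : HasDerivAt (fun x : ℝ => (1 - x) ^ (-β))
        ((-1) * (-β) * (1 - x) ^ (-β - 1)) x := by
      have : HasDerivAt (fun x : ℝ => 1 - x) (-1) x := by
        simpa using (hasDerivAt_id x).const_sub 1
      exact this.rpow_const (Or.inl (ne_of_gt h1))
    have d2 : HasDerivAt (fun x : ℝ => (1 + x) ^ (-β))
        (1 * (-β) * (1 + x) ^ (-β - 1)) x := by
      have : HasDerivAt (fun x : ℝ => 1 + x) 1 x := by
        simpa using (hasDerivAt_id x).const_add 1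
      exact this.rpow_const (Or.inl (ne_of_gt h2))
    have d3 : HasDerivAt (fun x : ℝ => 2 * β * x) (2 * β) x := by
      simpa using (hasDerivAt_id x).const_mul (2 * β)
    have := (d1.sub d2).sub d3
    refine this.congr_deriv ?_
    ring
  have mono : MonotoneOn g (Icc 0 t) := by
    apply monotoneOn_of_deriv_nonneg (convex_Icc 0 t)
    · exact fun x hx => (hder x hx).continuousAt.continuousWithinAt
    · intro x hx
      rw [interior_Icc] at hx
      exact (hder x (Ioo_subset_Icc_self hx)).differentiableAt.differentiableWithinAt
    · intro x hx
      rw [interior_Icc] at hx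
      rw [(hder x (Ioo_subset_Icc_self hx)).deriv]
      have h1 : (0:ℝ) < 1 - x := by have := hx.2; linarith
      have h2 : (0:ℝ) < 1 + x := by have := hx.1; linarith
      set a := (1 - x) ^ (-β - 1) with ha
      set b := (1 + x) ^ (-β - 1) with hb
      have hap : 0 < a := rpow_pos_of_pos h1 _
      have hbp : 0 < b := rpow_pos_of_pos h2 _
      have hab : 1 ≤ a * b := by
        rw [ha, hb, ← mul_rpow h1.le h2.le]
        apply one_le_rpow_of_pos_of_le_one_of_nonpos
        · nlinarith
        · nlinarith [hx.1.le, hx.2.le, ht1]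
        · linarith
      have h2le : 2 ≤ a + b := by nlinarith [sq_nonneg (a - b)]
      nlinarith
  have h0 : g 0 ≤ g t :=
    mono ⟨le_refl 0, ht0⟩ ⟨ht0, le_refl t⟩ ht0
  have hg0 : g 0 = 0 := by simp [hgdef]
  rw [hg0] at h0
  simp only [hgdef] at h0
  linarith

private lemma aux_mid_lrdu (β : ℝ) (hβ : 0 ≤ β) (x : ℝ) (hx0 : 0 ≤ x) (hx1 : x < 1) :
    2 * β * x * ((1 + x) * (1 - x)) ^ β ≤ (1 + x) ^ β - (1 - x) ^ β := by
  have h1 : (0:ℝ) < 1 - x := by linarith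
  have h2 : (0:ℝ) < 1 + x := by linarith
  have hP : (0:ℝ) < ((1 + x) * (1 - x)) ^ β := rpow_pos_of_pos (by nlinarith) _
  have hg := aux_g_lrdu β hβ x hx0 hx1
  have hmul := mul_le_mul_of_nonneg_right hg hP.le
  have e1 : (1 - x) ^ (-β) * ((1 + x) * (1 - x)) ^ β = (1 + x) ^ β := by
    rw [mul_rpow h2.le h1.le, rpow_neg h1.le]
    field_simp
  have e2 : (1 + x) ^ (-β) * ((1 + x) * (1 - x)) ^ β = (1 - x) ^ β := by
    rw [mul_rpow h2.le h1.le, rpow_neg h2.le]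
    have : (1 + x) ^ β ≠ 0 := ne_of_gt (rpow_pos_of_pos h2 _)
    field_simp
  calc 2 * β * x * ((1 + x) * (1 - x)) ^ β
      ≤ ((1 - x) ^ (-β) - (1 + x) ^ (-β)) * ((1 + x) * (1 - x)) ^ β := hmul
    _ = (1 + x) ^ β - (1 - x) ^ β := by rw [sub_mul, e1, e2]

private lemma aux_key_lrdu (α : ℝ) (hα : 1 ≤ α) (t : ℝ) (ht0 : 0 ≤ t) (ht1 : t < 1) :
    α + 1 ≤ (1 + t) ^ α + (1 - t) ^ α + (α - 1) * ((1 + t) * (1 - t)) ^ α := by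
  set f : ℝ → ℝ := fun x => (1 + x) ^ α + (1 - x) ^ α + (α - 1) * ((1 + x) * (1 - x)) ^ α
    with hfdef
  have hder : ∀ x ∈ Icc (0:ℝ) t, HasDerivAt f
      (α * (1 + x) ^ (α - 1) - α * (1 - x) ^ (α - 1)
        + (α - 1) * ((-2 * x) * α * ((1 + x) * (1 - x)) ^ (α - 1))) x := by
    intro x hx
    have h1 : (0:ℝ) < 1 - x := by have := hx.2; linarith
    have h2 : (0:ℝ) < 1 + x := by have := hx.1; linarith
    have da : HasDerivAt (fun x : ℝ => 1 + x) 1 x := by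
      simpa using (hasDerivAt_id x).const_add 1
    have db : HasDerivAt (fun x : ℝ => 1 - x) (-1) x := by
      simpa using (hasDerivAt_id x).const_sub 1
    have d1 : HasDerivAt (fun x : ℝ => (1 + x) ^ α) (1 * α * (1 + x) ^ (α - 1)) x :=
      da.rpow_const (Or.inl (ne_of_gt h2))
    have d2 : HasDerivAt (fun x : ℝ => (1 - x) ^ α) ((-1) * α * (1 - x) ^ (α - 1)) x :=
      db.rpow_const (Or.inl (ne_of_gt h1))
    have dm : HasDerivAt (fun x : ℝ => (1 + x) * (1 - x)) (1 * (1 - x) + (1 + x) * (-1)) x :=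
      da.mul db
    have d3 : HasDerivAt (fun x : ℝ => ((1 + x) * (1 - x)) ^ α)
        ((1 * (1 - x) + (1 + x) * (-1)) * α * ((1 + x) * (1 - x)) ^ (α - 1)) x :=
      dm.rpow_const (Or.inl (ne_of_gt (by nlinarith)))
    have := (d1.add d2).add ((d3.const_mul (α - 1)))
    refine this.congr_deriv ?_
    ring
  have mono : MonotoneOn f (Icc 0 t) := by
    apply monotoneOn_of_deriv_nonneg (convex_Icc 0 t)
    · exact fun x hx => (hder x hx).continuousAt.continuousWithinAt
    · intro x hx
      rw [interior_Icc] at hx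
      exact (hder x (Ioo_subset_Icc_self hx)).differentiableAt.differentiableWithinAt
    · intro x hx
      rw [interior_Icc] at hx
      rw [(hder x (Ioo_subset_Icc_self hx)).deriv]
      have hx0 : 0 ≤ x := hx.1.le
      have hx1 : x < 1 := hx.2.trans ht1
      have hmid := aux_mid_lrdu (α - 1) (by linarith) x hx0 hx1
      have hαpos : 0 < α := by linarith
      nlinarith [hmid, mul_le_mul_of_nonneg_left hmid hαpos.le]
  have h0 : f 0 ≤ f t := mono ⟨le_refl 0, ht0⟩ ⟨ht0, le_refl t⟩ ht0
  have hf0 : f 0 = α + 1 := by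
    simp [hfdef]
    ring
  rw [hf0] at h0
  simpa [hfdef] using h0

private lemma aux_keyP_lrdu (α : ℝ) (hα : 1 ≤ α) (y : ℝ) (hy : 1 < y) :
    (α + 1) * (y ^ α * y ^ α) ≤
      (y + 1) ^ α * y ^ α + (y - 1) ^ α * y ^ α + (α - 1) * ((y + 1) ^ α * (y - 1) ^ α) := by
  have hy0 : (0:ℝ) < y := by linarith
  have ht0 : (0:ℝ) ≤ 1 / y := by positivity
  have ht1 : 1 / y < 1 := by rw [div_lt_one hy0]; exact hy
  have hk := aux_key_lrdu α hα (1 / y) ht0 ht1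
  have e1 : (1:ℝ) + 1 / y = (y + 1) / y := by field_simp
  have e2 : (1:ℝ) - 1 / y = (y - 1) / y := by field_simp
  rw [e1, e2, div_rpow (by linarith) hy0.le, div_rpow (by linarith) hy0.le,
    div_mul_div_comm, div_rpow (by nlinarith) (by positivity)] at hk
  rw [mul_rpow (by linarith) (by linarith), mul_rpow hy0.le hy0.le] at hk
  have hyα : (0:ℝ) < y ^ α := rpow_pos_of_pos hy0 _
  have h2 := mul_le_mul_of_nonneg_right hk (mul_pos hyα hyα).le
  have e3 : ((y + 1) ^ α / y ^ α + (y - 1) ^ α / y ^ α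
      + (α - 1) * ((y + 1) ^ α * (y - 1) ^ α / (y ^ α * y ^ α))) * (y ^ α * y ^ α)
      = (y + 1) ^ α * y ^ α + (y - 1) ^ α * y ^ α
        + (α - 1) * ((y + 1) ^ α * (y - 1) ^ α) := by
    field_simp
  rw [e3] at h2
  linarith

private lemma aux_Q_lrdu (α : ℝ) (hα : 1 ≤ α) : ∀ n : ℕ, 1 ≤ n →
    α * ((n : ℝ) ^ α * ((n : ℝ) + 1) ^ α) ≤
      (α + 1) * ((∑ i ∈ Finset.Icc 1 n, (i : ℝ) ^ α) * (((n : ℝ) + 1) ^ α - (n : ℝ) ^ α)) := by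
  intro n hn
  induction n, hn using Nat.le_induction with
  | base =>
      have hb : 1 + α ≤ (1 + 1 : ℝ) ^ α := by
        simpa using one_add_mul_self_le_rpow_one_add (by norm_num : (-1:ℝ) ≤ 1) hα
      norm_num at hb ⊢
      nlinarith [hb]
  | succ n hn ih =>
      set y : ℝ := (n : ℝ) + 1 with hydef
      have hn1 : (1:ℝ) ≤ (n:ℝ) := by exact_mod_cast hn
      have hy1 : 1 < y := by rw [hydef]; linarith
      have hkP := aux_keyP_lrdu α hα y hy1
      have hyn : y - 1 = (n : ℝ) := by rw [hydef]; ring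
      rw [hyn] at hkP
      set P1 : ℝ := (n : ℝ) ^ α with hP1
      set P2 : ℝ := y ^ α with hP2
      set P3 : ℝ := (y + 1) ^ α with hP3
      have hn0 : (0:ℝ) < (n : ℝ) := by linarith
      have hP1p : 0 < P1 := rpow_pos_of_pos hn0 _
      have hP2p : 0 < P2 := rpow_pos_of_pos (by linarith) _
      have h12 : P1 < P2 := rpow_lt_rpow hn0.le (by rw [hydef]; linarith) (by linarith)
      have h23 : P2 < P3 := rpow_lt_rpow (by linarith) (by linarith) (by linarith)
      have hsum : (∑ i ∈ Finset.Icc 1 (n+1), (i : ℝ) ^ α)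
          = (∑ i ∈ Finset.Icc 1 n, (i : ℝ) ^ α) + P2 := by
        rw [Finset.sum_Icc_succ_top (by omega : 1 ≤ n + 1)]
        have : ((n + 1 : ℕ) : ℝ) = y := by rw [hydef]; push_cast; ring
        rw [this]
      push_cast
      rw [hsum]
      set S : ℝ := ∑ i ∈ Finset.Icc 1 n, (i : ℝ) ^ α with hS
      have hyid : ((n:ℝ) + 1) = y := hydef.symm
      rw [hyid]
      have hyid2 : (y + 1) ^ α = P3 := rfl
      rw [hyid2]
      have ihP : α * (P1 * P2) ≤ (α + 1) * (S * (P2 - P1)) := ih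
      have hh1 : 0 ≤ ((α + 1) * (S * (P2 - P1)) - α * (P1 * P2)) * (P3 - P2) :=
        mul_nonneg (by linarith) (by linarith)
      have hh2 : 0 ≤ (P3 * P2 + P1 * P2 + (α - 1) * (P3 * P1) - (α + 1) * (P2 * P2)) * P2 :=
        mul_nonneg (by linarith) hP2p.le
      nlinarith [hh1, hh2, mul_pos (sub_pos.mpr h12) (sub_pos.mpr h23)]

theorem lambda_ratio_difference_upper (α : ℝ) (hα : 1 ≤ α) (n : ℕ) (hn : 1 ≤ n) :
    (∑ i ∈ Finset.Icc 1 (n + 1), (i : ℝ) ^ α) / ((n : ℝ) + 1) ^ α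
      - (∑ i ∈ Finset.Icc 1 n, (i : ℝ) ^ α) / (n : ℝ) ^ α ≤ 1 / (α + 1) := by
  have hQ := aux_Q_lrdu α hα n hn
  have hn1 : (1:ℝ) ≤ (n:ℝ) := by exact_mod_cast hn
  have hn0 : (0:ℝ) < (n:ℝ) := by linarith
  have hP1p : (0:ℝ) < (n : ℝ) ^ α := rpow_pos_of_pos hn0 _
  have hP2p : (0:ℝ) < ((n : ℝ) + 1) ^ α := rpow_pos_of_pos (by linarith) _
  have hsum : (∑ i ∈ Finset.Icc 1 (n+1), (i : ℝ) ^ α)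
      = (∑ i ∈ Finset.Icc 1 n, (i : ℝ) ^ α) + ((n : ℝ) + 1) ^ α := by
    rw [Finset.sum_Icc_succ_top (by omega : 1 ≤ n + 1)]
    push_cast
    ring_nf
  rw [hsum]
  set S : ℝ := ∑ i ∈ Finset.Icc 1 n, (i : ℝ) ^ α with hS
  set P1 : ℝ := (n : ℝ) ^ α
  set P2 : ℝ := ((n : ℝ) + 1) ^ α
  have hα1 : (0:ℝ) < α + 1 := by linarith
  rw [div_sub_div _ _ (ne_of_gt hP2p) (ne_of_gt hP1p), div_le_div_iff₀ (by positivity) hα1]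
  nlinarith [hQ]
end

section
/- For every real α ≥ 1 and integer n ≥ 1, with Λ_n = ∑_{i=1}^n i^α, one has (Λ_n/n^α) · log((Λ_{n+1}/(n+1)^α)/(Λ_n/n^α)) ≤ 1/(α+1). -/
open Real Set

private lemma lemA (α : ℝ) (hα : 1 ≤ α) {u : ℝ} (hu : 1 ≤ u) :
    α * (u - u⁻¹) ≤ u ^ α - u ^ (-α) := by
  set f : ℝ → ℝ := fun u => u ^ α - u ^ (-α) - α * u + α * u⁻¹ with hf
  have key : ∀ v : ℝ, 1 ≤ v →
      HasDerivAt f (α * ((v ^ (α-1) - 1) * (1 - v ^ (-α-1)))) v := by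
    intro v hv
    have hv0 : v ≠ 0 := by positivity
    have h1 : HasDerivAt (fun x : ℝ => x ^ α) (α * v ^ (α-1)) v :=
      Real.hasDerivAt_rpow_const (Or.inl hv0)
    have h2 : HasDerivAt (fun x : ℝ => x ^ (-α)) (-α * v ^ (-α-1)) v :=
      Real.hasDerivAt_rpow_const (Or.inl hv0)
    have h3 : HasDerivAt (fun x : ℝ => α * x) α v := by
      simpa using (hasDerivAt_id v).const_mul α
    have h4 : HasDerivAt (fun x : ℝ => α * x⁻¹) (α * (-(v^2)⁻¹)) v :=
      (hasDerivAt_inv hv0).const_mul α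
    have := ((h1.sub h2).sub h3).add h4
    refine this.congr_deriv ?_
    have e2 : v ^ (α-1) * v ^ (-α-1) = (v^2)⁻¹ := by
      rw [← Real.rpow_add (by positivity : (0:ℝ) < v),
        show α - 1 + (-α - 1) = (-2:ℝ) by ring,
        Real.rpow_neg (by positivity), Real.rpow_two]
    linear_combination α * e2
  have mono : MonotoneOn f (Ici 1) := by
    apply monotoneOn_of_deriv_nonneg (convex_Ici 1)
    · intro v hv
      exact (key v hv).continuousAt.continuousWithinAt
    · intro v hv
      rw [interior_Ici] at hv
      exact (key v hv.le).differentiableAt.differentiableWithinAt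
    · intro v hv
      rw [interior_Ici] at hv
      rw [(key v hv.le).deriv]
      have hα1 : (1:ℝ) ≤ v ^ (α-1) := Real.one_le_rpow hv.le (by linarith)
      have hα2 : v ^ (-α-1) ≤ 1 :=
        Real.rpow_le_one_of_one_le_of_nonpos hv.le (by linarith)
      have : (0:ℝ) ≤ α := by linarith
      exact mul_nonneg this (mul_nonneg (by linarith) (by linarith))
  have h0 : f 1 = 0 := by simp [hf]
  have := mono (self_mem_Ici) hu hu
  rw [h0] at this
  simp only [hf] at this
  linarith

private lemma lemB (α : ℝ) (hα : 1 ≤ α) {t : ℝ} (ht : 0 < t) :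
    α * ((t * (t + 1)) ^ ((1:ℝ)/2)) ^ (α - 1) ≤ (t + 1) ^ α - t ^ α := by
  set s := (t * (t + 1)) ^ ((1:ℝ)/2) with hsdef
  have hs : 0 < s := Real.rpow_pos_of_pos (by nlinarith) _
  have hss : s * s = t * (t + 1) := by
    rw [hsdef, ← Real.rpow_add (by nlinarith)]; norm_num
  have hst : s ≤ t + 1 := by nlinarith
  have hu : 1 ≤ (t + 1) / s := (one_le_div hs).2 hst
  have h := lemA α hα hu
  have ht1 : (0:ℝ) < t + 1 := by linarith
  have e1 : (t + 1) / s - ((t + 1) / s)⁻¹ = 1 / s := by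
    rw [inv_div]; field_simp; nlinarith [hss]
  have e2 : ((t + 1) / s) ^ α = (t + 1) ^ α / s ^ α :=
    Real.div_rpow ht1.le hs.le α
  have e3 : ((t + 1) / s) ^ (-α) = s ^ α / (t + 1) ^ α := by
    rw [Real.rpow_neg (by positivity), e2, inv_div]
  have e4 : s ^ α * s ^ α = t ^ α * (t + 1) ^ α := by
    rw [← Real.mul_rpow hs.le hs.le, hss, Real.mul_rpow ht.le ht1.le]
  have e5 : s ^ (α - 1) = s ^ α / s := by
    rw [Real.rpow_sub hs, Real.rpow_one]
  rw [e1, e2, e3] at h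
  have hsa : (0:ℝ) < s ^ α := Real.rpow_pos_of_pos hs α
  have hta : (0:ℝ) < (t + 1) ^ α := Real.rpow_pos_of_pos ht1 α
  calc α * s ^ (α - 1) = s ^ α * (α * (1 / s)) := by rw [e5]; field_simp
    _ ≤ s ^ α * ((t + 1) ^ α / s ^ α - s ^ α / (t + 1) ^ α) :=
        mul_le_mul_of_nonneg_left h hsa.le
    _ = (t + 1) ^ α - t ^ α := by
        have h1 : s ^ α * ((t + 1) ^ α / s ^ α) = (t + 1) ^ α := by
          field_simp
        have h2 : s ^ α * (s ^ α / (t + 1) ^ α) = t ^ α := by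
          rw [← mul_div_assoc, e4, mul_div_assoc, div_self hta.ne', mul_one]
        rw [mul_sub, h1, h2]

private lemma lemC (α : ℝ) (hα : 1 ≤ α) :
    MonotoneOn (fun t : ℝ => t / α - t ^ α / ((t + 1) ^ α - t ^ α)) (Ici 1) := by
  have hα0 : (0:ℝ) < α := by linarith
  have key : ∀ v : ℝ, 0 < v → HasDerivAt (fun t : ℝ => t / α - t ^ α / ((t + 1) ^ α - t ^ α))
      (1/α - (α * v ^ (α-1) * ((v+1)^α - v^α) - v^α * (α*(v+1)^(α-1) - α*v^(α-1)))
        / ((v+1)^α - v^α)^2) v := by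
    intro v hv0
    have hD : (0:ℝ) < (v+1)^α - v^α :=
      sub_pos.2 (Real.rpow_lt_rpow hv0.le (lt_add_one v) hα0)
    have h1 : HasDerivAt (fun x : ℝ => x ^ α) (α * v ^ (α-1)) v :=
      Real.hasDerivAt_rpow_const (Or.inl hv0.ne')
    have h2 : HasDerivAt (fun x : ℝ => (x+1) ^ α) (α * (v+1) ^ (α-1)) v := by
      have h := (Real.hasDerivAt_rpow_const (x := v+1) (p := α)
        (Or.inl (by positivity))).comp v ((hasDerivAt_id v).add_const 1)
      simpa [Function.comp_def] using h
    have hd := h1.div (h2.sub h1) hD.ne'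
    have h3 := ((hasDerivAt_id v).div_const α).sub hd
    exact h3
  apply monotoneOn_of_deriv_nonneg (convex_Ici 1)
  · intro v hv
    exact (key v (by simp at hv; linarith)).continuousAt.continuousWithinAt
  · intro v hv
    rw [interior_Ici] at hv
    exact (key v (by linarith [mem_Ioi.1 hv])).differentiableAt.differentiableWithinAt
  · intro v hv
    rw [interior_Ici] at hv
    have hv1 : (1:ℝ) < v := hv
    have hv0 : (0:ℝ) < v := by linarith
    rw [(key v hv0).deriv]
    have hD : (0:ℝ) < (v+1)^α - v^α :=
      sub_pos.2 (Real.rpow_lt_rpow hv0.le (lt_add_one v) hα0)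
    have ev : v ^ (α-1) * v = v ^ α := by
      rw [← Real.rpow_add_one hv0.ne' (α-1)]; norm_num
    have ew : (v+1) ^ (α-1) * (v+1) = (v+1) ^ α := by
      rw [← Real.rpow_add_one (by positivity : v+1 ≠ 0) (α-1)]; norm_num
    have eN : α * v ^ (α-1) * ((v+1)^α - v^α) - v^α * (α*(v+1)^(α-1) - α*v^(α-1))
        = α * (v ^ (α-1) * (v+1) ^ (α-1)) := by
      rw [← ev, ← ew]; ring
    rw [eN]
    rw [sub_nonneg, div_le_div_iff₀ (by positivity) hα0, one_mul]
    have hB := lemB α hα hv0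
    have hs : (0:ℝ) < (v * (v + 1)) ^ ((1:ℝ)/2) := Real.rpow_pos_of_pos (by positivity) _
    have hsq : ((v * (v+1)) ^ ((1:ℝ)/2)) ^ (α-1) * ((v * (v+1)) ^ ((1:ℝ)/2)) ^ (α-1)
        = v ^ (α-1) * (v+1) ^ (α-1) := by
      rw [← Real.mul_rpow hs.le hs.le, ← Real.rpow_add (by positivity : (0:ℝ) < v*(v+1))]
      norm_num
      rw [Real.mul_rpow hv0.le (by positivity)]
    have hsqle := mul_self_le_mul_self
      (by positivity : (0:ℝ) ≤ α * ((v * (v+1)) ^ ((1:ℝ)/2)) ^ (α-1)) hB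
    rw [sq, ← hsq]
    nlinarith [hsqle]

private lemma lemKey (α : ℝ) (hα : 1 ≤ α) (n : ℕ) (hn : 1 ≤ n) :
    α * ((n:ℝ)^α * ((n:ℝ)+1)^α)
      ≤ (α+1) * (∑ i ∈ Finset.Icc 1 n, (i:ℝ)^α) * (((n:ℝ)+1)^α - (n:ℝ)^α) := by
  have hα0 : (0:ℝ) < α := by linarith
  induction n, hn using Nat.le_induction with
  | base =>
    have h2 : (1:ℝ) + α * 1 ≤ (1+1) ^ α := one_add_mul_self_le_rpow_one_add (by norm_num) hα
    norm_num at h2 ⊢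
    nlinarith [h2]
  | succ n hn ih =>
    have hm1 : (1:ℝ) ≤ (n:ℝ) := by exact_mod_cast hn
    have hm0 : (0:ℝ) < (n:ℝ) := by linarith
    set m := (n:ℝ) with hm
    have hsum : ∑ i ∈ Finset.Icc 1 (n+1), (i:ℝ)^α
        = (∑ i ∈ Finset.Icc 1 n, (i:ℝ)^α) + (m+1)^α := by
      rw [Finset.sum_Icc_succ_top (by omega : 1 ≤ n+1)]
      push_cast
      ring_nf
      rfl
    set Λ := ∑ i ∈ Finset.Icc 1 n, (i:ℝ)^α with hΛ
    have hΛpos : 0 < Λ := by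
      apply Finset.sum_pos
      · intro i hi
        have : 1 ≤ i := (Finset.mem_Icc.1 hi).1
        exact Real.rpow_pos_of_pos (by exact_mod_cast this) α
      · exact ⟨1, Finset.mem_Icc.2 ⟨le_refl 1, hn⟩⟩
    have hcast : ((n+1:ℕ):ℝ) = m + 1 := by push_cast; ring
    rw [hsum, hcast]
    set A := m ^ α with hA
    set B := (m+1) ^ α with hB
    set C := (m+2) ^ α with hC
    have hApos : 0 < A := Real.rpow_pos_of_pos hm0 α
    have hBpos : 0 < B := Real.rpow_pos_of_pos (by linarith) α
    have hCpos : 0 < C := Real.rpow_pos_of_pos (by linarith) α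
    have hDA : 0 < B - A := sub_pos.2 (Real.rpow_lt_rpow hm0.le (by linarith) hα0)
    have hDB : 0 < C - B := sub_pos.2 (Real.rpow_lt_rpow (by linarith) (by linarith) hα0)
    -- monotonicity consequence
    have hmono := lemC α hα (show m ∈ Ici (1:ℝ) from hm1)
      (show m + 1 ∈ Ici (1:ℝ) by simp; linarith) (by linarith : m ≤ m + 1)
    simp only [] at hmono
    have e21 : m + 1 + 1 = m + 2 := by ring
    rw [e21] at hmono
    -- hmono : m/α - A/(B-A) ≤ (m+1)/α - B/(C-B)
    have e2 : (m+1)/α - m/α = 1/α := by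
      rw [div_sub_div_same]; norm_num
    have hCineq : B/(C-B) ≤ A/(B-A) + 1/α := by linarith
    have hcomb : A/(B-A) + 1/α = (α*A + (B-A))/(α*(B-A)) := by
      field_simp
    rw [hcomb, div_le_div_iff₀ hDB (by positivity)] at hCineq
    -- hCineq : B * (α * (B-A)) ≤ (α*A + (B-A)) * (C-B)
    have hgoal : α * (B * C) ≤ (α+1) * (Λ + B) * (C - B) := by
      nlinarith [mul_le_mul_of_nonneg_right hCineq hBpos.le,
        mul_le_mul_of_nonneg_right ih hDB.le,
        mul_pos hDA hDB, hΛpos, hBpos, hDA]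
    -- target uses (m+1)+1
    calc α * (B * ((m+1)+1)^α) = α * (B * C) := by rw [e21]
      _ ≤ (α+1) * (Λ + B) * (C - B) := hgoal
      _ = (α+1) * (Λ + B) * (((m+1)+1)^α - B) := by rw [e21]

theorem lambda_ratio_log_upper (α : ℝ) (hα : 1 ≤ α) (n : ℕ) (hn : 1 ≤ n) :
    ((∑ i ∈ Finset.Icc 1 n, (i : ℝ) ^ α) / (n : ℝ) ^ α)
        * Real.log (((∑ i ∈ Finset.Icc 1 (n + 1), (i : ℝ) ^ α) / ((n : ℝ) + 1) ^ α)
            / ((∑ i ∈ Finset.Icc 1 n, (i : ℝ) ^ α) / (n : ℝ) ^ α))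
      ≤ 1 / (α + 1) := by
  have hα0 : (0:ℝ) < α := by linarith
  have hα1 : (0:ℝ) < α + 1 := by linarith
  have hm1 : (1:ℝ) ≤ (n:ℝ) := by exact_mod_cast hn
  have hm0 : (0:ℝ) < (n:ℝ) := by linarith
  set m := (n:ℝ) with hm
  set S := ∑ i ∈ Finset.Icc 1 n, (i:ℝ)^α with hS
  have hSpos : 0 < S := by
    apply Finset.sum_pos
    · intro i hi
      have : 1 ≤ i := (Finset.mem_Icc.1 hi).1
      exact Real.rpow_pos_of_pos (by exact_mod_cast this) α
    · exact ⟨1, Finset.mem_Icc.2 ⟨le_refl 1, hn⟩⟩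
  set A := m ^ α with hA
  set B := (m+1) ^ α with hB
  have hApos : 0 < A := Real.rpow_pos_of_pos hm0 α
  have hBpos : 0 < B := Real.rpow_pos_of_pos (by linarith) α
  have hDA : 0 < B - A := sub_pos.2 (Real.rpow_lt_rpow hm0.le (by linarith) hα0)
  have hsum : ∑ i ∈ Finset.Icc 1 (n+1), (i:ℝ)^α = S + B := by
    rw [hS, Finset.sum_Icc_succ_top (by omega : 1 ≤ n+1)]
    push_cast
    rw [hB, hm]
  rw [hsum]
  have ha : 0 < S / A := div_pos hSpos hApos
  have hb : 0 < (S + B) / B := div_pos (by linarith) hBpos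
  have hlog : Real.log ((S + B) / B / (S / A)) ≤ (S + B) / B / (S / A) - 1 :=
    Real.log_le_sub_one_of_pos (div_pos hb ha)
  have step1 : S / A * Real.log ((S + B) / B / (S / A))
      ≤ S / A * ((S + B) / B / (S / A) - 1) :=
    mul_le_mul_of_nonneg_left hlog ha.le
  have step2 : S / A * ((S + B) / B / (S / A) - 1) = (S + B) / B - S / A := by
    field_simp
  have hkey := lemKey α hα n hn
  -- hkey : α * (A * B) ≤ (α+1) * S * (B - A)
  have step3 : (S + B) / B - S / A ≤ 1 / (α + 1) := by
    have e : (S + B) / B - S / A = 1 - S * (B - A) / (A * B) := by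
      field_simp
      ring
    have h4 : α / (α + 1) ≤ S * (B - A) / (A * B) := by
      rw [div_le_div_iff₀ hα1 (by positivity)]
      nlinarith [hkey]
    have h5 : α / (α + 1) + 1 / (α + 1) = 1 := by
      field_simp
    rw [e]
    linarith
  calc S / A * Real.log ((S + B) / B / (S / A))
      ≤ S / A * ((S + B) / B / (S / A) - 1) := step1
    _ = (S + B) / B - S / A := step2
    _ ≤ 1 / (α + 1) := step3
end

section
/- For every real α ≥ 1 and integer n ≥ 1, with Λ_n = ∑_{i=1}^n i^α, one has Λ_{n+1}/(n+1)^α − Λ_n/n^α ≥ (1/(α+1)) · n^α/(n+1)^α. -/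
private lemma lemA_aux (α : ℝ) (hα : 1 ≤ α) (a b t : ℝ) (ha : 1 ≤ a) (hab : a ≤ b)
    (ht : 0 ≤ t) :
    a ^ α * (b + t) ^ (α - 1) ≤ b ^ (α - 1) * (a + t) ^ α := by
  have ha0 : (0:ℝ) < a := by linarith
  have hb0 : (0:ℝ) < b := by linarith
  have h1 : (b + t) ^ (α - 1) = b ^ (α - 1) * (1 + t / b) ^ (α - 1) := by
    rw [← Real.mul_rpow hb0.le (by positivity)]
    congr 1
    field_simp
  have h2 : (a + t) ^ α = a ^ α * (1 + t / a) ^ α := by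
    rw [← Real.mul_rpow ha0.le (by positivity)]
    congr 1
    field_simp
  rw [h1, h2]
  have key : (1 + t / b) ^ (α - 1) ≤ (1 + t / a) ^ α := by
    calc (1 + t / b) ^ (α - 1) ≤ (1 + t / a) ^ (α - 1) := by
          apply Real.rpow_le_rpow (by positivity) _ (by linarith)
          gcongr
      _ ≤ (1 + t / a) ^ α := by
          apply Real.rpow_le_rpow_of_exponent_le _ (by linarith)
          have : 0 ≤ t / a := by positivity
          linarith
  calc a ^ α * (b ^ (α - 1) * (1 + t / b) ^ (α - 1))
      ≤ a ^ α * (b ^ (α - 1) * (1 + t / a) ^ α) := by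
        apply mul_le_mul_of_nonneg_left _ (by positivity)
        exact mul_le_mul_of_nonneg_left key (by positivity)
    _ = b ^ (α - 1) * (a ^ α * (1 + t / a) ^ α) := by ring

private lemma shift_integral (β c : ℝ) (hβ : -1 < β) :
    ∫ t in (0:ℝ)..1, (c + t) ^ β = ((c + 1) ^ (β + 1) - c ^ (β + 1)) / (β + 1) := by
  have h := intervalIntegral.integral_comp_add_left (a := (0:ℝ)) (b := 1)
      (fun x => x ^ β) c
  rw [h, add_zero, integral_rpow (Or.inl hβ)]

private lemma lemB_aux (α : ℝ) (hα : 1 ≤ α) (a b : ℝ) (ha : 1 ≤ a) (hab : a ≤ b) :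
    (α + 1) * (a ^ α * ((b + 1) ^ α - b ^ α)) ≤
      α * (b ^ (α - 1) * ((a + 1) ^ (α + 1) - a ^ (α + 1))) := by
  have hb : 1 ≤ b := le_trans ha hab
  have hα0 : (0:ℝ) < α := by linarith
  have hα1 : (0:ℝ) < α + 1 := by linarith
  have cont1 : Continuous fun t : ℝ => a ^ α * (b + t) ^ (α - 1) :=
    continuous_const.mul
      ((continuous_const.add continuous_id).rpow_const (fun x => Or.inr (by linarith)))
  have cont2 : Continuous fun t : ℝ => b ^ (α - 1) * (a + t) ^ α :=
    continuous_const.mul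
      ((continuous_const.add continuous_id).rpow_const (fun x => Or.inr (by linarith)))
  have mono : (∫ t in (0:ℝ)..1, a ^ α * (b + t) ^ (α - 1)) ≤
      ∫ t in (0:ℝ)..1, b ^ (α - 1) * (a + t) ^ α := by
    apply intervalIntegral.integral_mono_on (by norm_num)
      (cont1.intervalIntegrable 0 1) (cont2.intervalIntegrable 0 1)
    intro t ht
    exact lemA_aux α hα a b t ha hab (Set.mem_Icc.mp ht).1
  rw [intervalIntegral.integral_const_mul, intervalIntegral.integral_const_mul,
    shift_integral (α - 1) b (by linarith), shift_integral α a (by linarith)] at mono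
  have e1 : α - 1 + 1 = α := by ring
  rw [e1] at mono
  have mono' : a ^ α * ((b + 1) ^ α - b ^ α) / α ≤
      b ^ (α - 1) * ((a + 1) ^ (α + 1) - a ^ (α + 1)) / (α + 1) := by
    rw [mul_div_assoc, mul_div_assoc]
    exact mono
  rw [div_le_div_iff₀ hα0 hα1] at mono'
  linarith

private lemma tele_aux (α : ℝ) (m : ℕ) :
    ∑ i ∈ Finset.Icc 1 m, (((i:ℝ) + 1) ^ (α + 1) - (i:ℝ) ^ (α + 1)) =
      ((m:ℝ) + 1) ^ (α + 1) - 1 := by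
  induction m with
  | zero => simp
  | succ k ih =>
      rw [Finset.sum_Icc_succ_top (by omega : 1 ≤ k + 1), ih]
      push_cast
      ring

theorem lambda_ratio_difference_lower (α : ℝ) (hα : 1 ≤ α) (n : ℕ) (hn : 1 ≤ n) :
    (∑ i ∈ Finset.Icc 1 (n + 1), (i : ℝ) ^ α) / ((n : ℝ) + 1) ^ α
      - (∑ i ∈ Finset.Icc 1 n, (i : ℝ) ^ α) / (n : ℝ) ^ α
      ≥ 1 / (α + 1) * ((n : ℝ) ^ α / ((n : ℝ) + 1) ^ α) := by
  obtain ⟨m, rfl⟩ : ∃ m, n = m + 1 := ⟨n - 1, by omega⟩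
  set N : ℝ := ((m + 1 : ℕ) : ℝ) with hN
  have hN1 : 1 ≤ N := by rw [hN]; exact_mod_cast Nat.one_le_iff_ne_zero.mpr (by omega)
  have hN0 : (0:ℝ) < N := by linarith
  have hα1 : (0:ℝ) < α + 1 := by linarith
  have hα0 : (0:ℝ) < α := by linarith
  set A : ℝ := N ^ α with hA
  set B : ℝ := (N + 1) ^ α with hB
  have hA0 : (0:ℝ) < A := Real.rpow_pos_of_pos hN0 _
  have hB0 : (0:ℝ) < B := Real.rpow_pos_of_pos (by linarith) _
  -- core claim
  have core : (α + 1) * ((B - A) * ∑ i ∈ Finset.Icc 1 m, (i:ℝ) ^ α) ≤ α * (A * A) := by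
    have step : ∀ i ∈ Finset.Icc 1 m,
        (α + 1) * ((B - A) * (i:ℝ) ^ α) ≤
          α * (N ^ (α - 1) * (((i:ℝ) + 1) ^ (α + 1) - (i:ℝ) ^ (α + 1))) := by
      intro i hi
      obtain ⟨hi1, hi2⟩ := Finset.mem_Icc.mp hi
      have hia : (1:ℝ) ≤ (i:ℝ) := by exact_mod_cast hi1
      have hib : (i:ℝ) ≤ N := by
        rw [hN]; exact_mod_cast (by omega : i ≤ m + 1)
      have hkey := lemB_aux α hα (i:ℝ) N hia hib
      calc (α + 1) * ((B - A) * (i:ℝ) ^ α)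
          = (α + 1) * ((i:ℝ) ^ α * ((N + 1) ^ α - N ^ α)) := by rw [hA, hB]; ring
        _ ≤ α * (N ^ (α - 1) * (((i:ℝ) + 1) ^ (α + 1) - (i:ℝ) ^ (α + 1))) := hkey
    have sum_le := Finset.sum_le_sum step
    have lhs_eq : ∑ i ∈ Finset.Icc 1 m, (α + 1) * ((B - A) * (i:ℝ) ^ α)
        = (α + 1) * ((B - A) * ∑ i ∈ Finset.Icc 1 m, (i:ℝ) ^ α) := by
      rw [Finset.mul_sum]
      congr 1
      rw [Finset.mul_sum]
    have rhs_eq : ∑ i ∈ Finset.Icc 1 m,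
          α * (N ^ (α - 1) * (((i:ℝ) + 1) ^ (α + 1) - (i:ℝ) ^ (α + 1)))
        = α * (N ^ (α - 1) * (((m:ℝ) + 1) ^ (α + 1) - 1)) := by
      rw [← Finset.mul_sum, ← Finset.mul_sum, tele_aux α m]
    rw [lhs_eq, rhs_eq] at sum_le
    have hNm : ((m:ℝ) + 1) = N := by rw [hN]; push_cast; ring
    rw [hNm] at sum_le
    have hpow : N ^ (α - 1) * N ^ (α + 1) = A * A := by
      rw [hA, ← Real.rpow_add hN0, ← Real.rpow_add hN0]
      congr 1; ring
    have h1 : (0:ℝ) < N ^ (α - 1) := Real.rpow_pos_of_pos hN0 _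
    have hle : N ^ (α - 1) * (N ^ (α + 1) - 1) ≤ A * A := by nlinarith [hpow]
    calc (α + 1) * ((B - A) * ∑ i ∈ Finset.Icc 1 m, (i:ℝ) ^ α)
        ≤ α * (N ^ (α - 1) * (N ^ (α + 1) - 1)) := sum_le
      _ ≤ α * (A * A) := by nlinarith [hle]
  -- split sums
  have split2 : (∑ i ∈ Finset.Icc 1 (m + 1), (i : ℝ) ^ α) =
      (∑ i ∈ Finset.Icc 1 m, (i : ℝ) ^ α) + A := by
    rw [Finset.sum_Icc_succ_top (by omega : 1 ≤ m + 1)]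
  set S : ℝ := ∑ i ∈ Finset.Icc 1 (m + 1), (i : ℝ) ^ α with hS
  have split : (∑ i ∈ Finset.Icc 1 (m + 1 + 1), (i : ℝ) ^ α) = S + B := by
    rw [Finset.sum_Icc_succ_top (by omega : 1 ≤ m + 1 + 1), hS]
    congr 1
    rw [hB, hN]; push_cast; ring
  -- key algebraic inequality
  have hBA : A ≤ B := by
    rw [hA, hB]
    exact Real.rpow_le_rpow hN0.le (by linarith) (by linarith)
  have key : A * A / (α + 1) ≤ A * B - (B - A) * S := by
    rw [div_le_iff₀ hα1, split2]
    nlinarith [core]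
  have goal_eq : (∑ i ∈ Finset.Icc 1 (m + 1 + 1), (i : ℝ) ^ α) / B - S / A
      = (A * B - (B - A) * S) / (A * B) := by
    rw [split]
    field_simp
    ring
  have rhs_eq2 : 1 / (α + 1) * (A / B) = (A * A / (α + 1)) / (A * B) := by
    field_simp
  rw [ge_iff_le, goal_eq, rhs_eq2]
  gcongr
end

section
/- Fix M > 0. The function h ↦ (e^{h−M} − h + M − 1)/h² is increasing on [max(2, 2M), ∞). -/
theorem aux_function_monotone (M : ℝ) (hM : 0 < M) :
    MonotoneOn (fun h : ℝ => (Real.exp (h - M) - h + M - 1) / h ^ 2)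
      (Set.Ici (max 2 (2 * M))) := by
  set a := max 2 (2 * M) with ha
  have ha2 : (2:ℝ) ≤ a := le_max_left _ _
  have haM : 2 * M ≤ a := le_max_right _ _
  have hderiv : ∀ x ∈ Set.Ici a, x ≠ 0 := by
    intro x hx
    have : (2:ℝ) ≤ x := le_trans ha2 hx
    linarith
  have hd : ∀ x : ℝ, x ≠ 0 →
      HasDerivAt (fun h : ℝ => (Real.exp (h - M) - h + M - 1) / h ^ 2)
        (((Real.exp (x - M) - 1) * x ^ 2 - (Real.exp (x - M) - x + M - 1) * (2 * x)) / (x ^ 2) ^ 2) x := by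
    intro x hx
    have hnum : HasDerivAt (fun h : ℝ => Real.exp (h - M) - h + M - 1)
        (Real.exp (x - M) - 1) x := by
      have h1 : HasDerivAt (fun h : ℝ => h - M) 1 x := by
        simpa using (hasDerivAt_id x).sub_const M
      have h2 := (Real.hasDerivAt_exp (x - M)).comp x h1
      simpa using ((h2.sub (hasDerivAt_id x)).add_const M).sub_const 1
    have hden : HasDerivAt (fun h : ℝ => h ^ 2) (2 * x) x := by
      simpa [mul_comm] using hasDerivAt_pow 2 x
    exact hnum.div hden (pow_ne_zero 2 hx)
  apply monotoneOn_of_deriv_nonneg (convex_Ici a)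
  · apply ContinuousOn.div
    · fun_prop
    · fun_prop
    · intro x hx; exact pow_ne_zero 2 (hderiv x hx)
  · intro x hx
    rw [interior_Ici] at hx
    exact (hd x (by have := (Set.mem_Ioi.mp hx).le; exact hderiv x this)).differentiableAt.differentiableWithinAt
  · intro x hx
    rw [interior_Ici] at hx
    have hx0 : x ≠ 0 := hderiv x (Set.mem_Ioi.mp hx).le
    rw [(hd x hx0).deriv]
    have h2x : (2:ℝ) < x := lt_of_le_of_lt ha2 hx
    have hMx : 2 * M < x := lt_of_le_of_lt haM hx
    have he : 1 ≤ Real.exp (x - M) := Real.one_le_exp (by linarith)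
    have hden : (0:ℝ) < (x ^ 2) ^ 2 := by positivity
    apply div_nonneg _ hden.le
    nlinarith [mul_nonneg (by linarith : (0:ℝ) ≤ x - 2) (by linarith : (0:ℝ) ≤ Real.exp (x - M) - 1), mul_pos (by linarith : (0:ℝ) < x) (by linarith : (0:ℝ) < x - M)]
end

section
/- Let α ≥ 1 be real and Λ_n = ∑_{i=1}^n i^α. Then n^α/Λ_n = (α+1)/n + O(1/n²) as n → ∞, i.e., there is a constant K such that |n^α/Λ_n − (α+1)/n| ≤ K/n² for all n ≥ 1. -/
open Finset Real

lemma mvt_rpow (α : ℝ) (hα : 1 ≤ α) (a : ℝ) (ha : 0 ≤ a) :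
    (α + 1) * a ^ α ≤ (a + 1) ^ (α + 1) - a ^ (α + 1) ∧
    (a + 1) ^ (α + 1) - a ^ (α + 1) ≤ (α + 1) * (a + 1) ^ α := by
  have hp : (1:ℝ) ≤ α + 1 := by linarith
  have hd : ∀ x : ℝ, HasDerivAt (fun y : ℝ => y ^ (α + 1)) ((α + 1) * x ^ α) x := by
    intro x
    have := Real.hasDerivAt_rpow_const (x := x) (p := α + 1) (Or.inr hp)
    simpa using this
  obtain ⟨c, hc, hceq⟩ := exists_hasDerivAt_eq_slope (fun y : ℝ => y ^ (α + 1))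
    (fun x => (α + 1) * x ^ α) (by linarith : a < a + 1)
    (fun x _ => (hd x).continuousAt.continuousWithinAt) (fun x _ => hd x)
  rw [show a + 1 - a = 1 by ring, div_one] at hceq
  have hac : a ≤ c := le_of_lt hc.1
  have hc1 : c ≤ a + 1 := le_of_lt hc.2
  have h0c : 0 ≤ c := le_trans ha hac
  have hle1 : a ^ α ≤ c ^ α := Real.rpow_le_rpow ha hac (by linarith)
  have hle2 : c ^ α ≤ (a + 1) ^ α := Real.rpow_le_rpow h0c hc1 (by linarith)
  constructor
  · rw [← hceq]; nlinarith
  · rw [← hceq]; nlinarith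

theorem lambda_over_Lambda_asymptotic (α : ℝ) (hα : 1 ≤ α) :
    ∃ K : ℝ, ∀ n : ℕ, 1 ≤ n →
      |(n : ℝ) ^ α / (∑ i ∈ Finset.Icc 1 n, (i : ℝ) ^ α) - (α + 1) / (n : ℝ)|
        ≤ K / (n : ℝ) ^ 2 := by
  have hp1 : (0:ℝ) < α + 1 := by linarith
  -- lower bound on (α+1)·Λ_n
  have hlow : ∀ n : ℕ, (n : ℝ) ^ (α + 1) ≤ (α + 1) * ∑ i ∈ Finset.Icc 1 n, (i : ℝ) ^ α := by
    intro n
    induction n with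
    | zero => simp [Real.zero_rpow (by positivity : α + 1 ≠ 0)]
    | succ n ih =>
      rw [Finset.sum_Icc_succ_top (by omega : 1 ≤ n + 1), mul_add]
      have h := (mvt_rpow α hα n (Nat.cast_nonneg n)).2
      push_cast
      push_cast at h ih
      linarith
  -- upper bound on (α+1)·Λ_n
  have hup : ∀ n : ℕ, (α + 1) * ∑ i ∈ Finset.Icc 1 n, (i : ℝ) ^ α
      ≤ (n : ℝ) ^ (α + 1) + (α + 1) * (n : ℝ) ^ α := by
    intro n
    induction n with
    | zero => simp [Real.zero_rpow (by positivity : α + 1 ≠ 0),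
        Real.zero_rpow (by positivity : α ≠ 0)]
    | succ n ih =>
      rw [Finset.sum_Icc_succ_top (by omega : 1 ≤ n + 1), mul_add]
      have h := (mvt_rpow α hα n (Nat.cast_nonneg n)).1
      push_cast
      push_cast at h ih
      linarith
  refine ⟨(α + 1) ^ 2, fun n hn => ?_⟩
  have hl := hlow n
  have hu := hup n
  set S := ∑ i ∈ Finset.Icc 1 n, (i : ℝ) ^ α with hS
  have np : (0:ℝ) < n := by exact_mod_cast Nat.pos_of_ne_zero (by omega)
  have hA : (0:ℝ) < (n : ℝ) ^ α := Real.rpow_pos_of_pos np α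
  have hSpos : 0 < S := by
    have := hlow n
    have h1 : (0:ℝ) < (n : ℝ) ^ (α + 1) := Real.rpow_pos_of_pos np (α + 1)
    nlinarith
  have hnA : (n : ℝ) ^ (α + 1) = (n : ℝ) * (n : ℝ) ^ α := by
    rw [Real.rpow_add np, Real.rpow_one, mul_comm ((n:ℝ)^α)]
  rw [hnA] at hl hu
  set A := (n : ℝ) ^ α
  have key : A / S - (α + 1) / n = ((n : ℝ) * A - (α + 1) * S) / ((n : ℝ) * S) := by
    field_simp
  rw [key, abs_div, abs_of_nonpos (by linarith : (n:ℝ) * A - (α + 1) * S ≤ 0),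
    abs_of_pos (mul_pos np hSpos), div_le_div_iff₀ (mul_pos np hSpos) (by positivity)]
  have h1 : ((α + 1) * S - (n:ℝ) * A) * (n:ℝ) ^ 2 ≤ (α + 1) * A * (n:ℝ) ^ 2 := by
    nlinarith [sq_nonneg (n:ℝ)]
  have h2 : (α + 1) * A * (n:ℝ) ^ 2 ≤ (α + 1) ^ 2 * ((n:ℝ) * S) := by
    nlinarith [mul_le_mul_of_nonneg_right (mul_le_mul_of_nonneg_left hl hp1.le) np.le]
  linarith
end

section
/- Let λ : ℕ → ℝ be positive with Λ_n = ∑_{k=1}^n λ_k, and suppose M := sup_n (Λ_n/λ_n)·log((Λ_{n+1}/λ_{n+1})/(Λ_n/λ_n)) < ∞. Define h_1(μ) = 0 and h_{k+1}(μ) = (Λ_k/Λ_{k+1})·h_k(μ) − (Λ_k/Λ_{k+1})·log(λ_{k+1}/λ_k − (λ_{k+1}/(Λ_k μ))·e^{h_k(μ)}) whenever the argument of the log is positive. Then for every μ ≥ e^M and every k ≥ 2, the quantity h_k(μ) is well-defined and satisfies h_k(μ) ≤ M·Λ_{k−1}/Λ_k. -/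
theorem recursion_well_defined_and_bounded
    (lam : ℕ → ℝ) (hlam : ∀ k, 1 ≤ k → 0 < lam k)
    (Λ : ℕ → ℝ) (hΛ : ∀ n, Λ n = ∑ k ∈ Finset.Icc 1 n, lam k)
    (M : ℝ)
    (hM : ∀ n, 1 ≤ n →
      (Λ n / lam n) * Real.log ((Λ (n + 1) / lam (n + 1)) / (Λ n / lam n)) ≤ M)
    (μ : ℝ) (hμ : Real.exp M ≤ μ) :
    ∃ h : ℕ → ℝ, h 1 = 0 ∧
      (∀ k, 1 ≤ k →
        0 < lam (k + 1) / lam k - (lam (k + 1) / (Λ k * μ)) * Real.exp (h k) ∧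
        h (k + 1) = (Λ k / Λ (k + 1)) * h k
          - (Λ k / Λ (k + 1))
              * Real.log (lam (k + 1) / lam k
                  - (lam (k + 1) / (Λ k * μ)) * Real.exp (h k))) ∧
      (∀ k, 2 ≤ k → h k ≤ M * Λ (k - 1) / Λ k) := by
  have hΛsucc : ∀ k, Λ (k + 1) = Λ k + lam (k + 1) := by
    intro k
    rw [hΛ, hΛ, Finset.sum_Icc_succ_top (by omega)]
  have hΛpos : ∀ k, 1 ≤ k → 0 < Λ k := by
    intro k hk
    rw [hΛ]
    apply Finset.sum_pos
    · intro i hi; exact hlam i (Finset.mem_Icc.mp hi).1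
    · exact ⟨1, Finset.mem_Icc.mpr ⟨le_refl 1, hk⟩⟩
  have hΛ0 : Λ 0 = 0 := by rw [hΛ]; simp
  have hΛ1 : Λ 1 = lam 1 := by rw [hΛ]; simp
  have hMpos : 0 < M := by
    have h1 := hM 1 le_rfl
    have l1 := hlam 1 le_rfl
    have l2 := hlam 2 (by norm_num)
    have e1 : Λ 1 / lam 1 = 1 := by rw [hΛ1]; field_simp
    rw [e1, div_one, one_mul] at h1
    have h2 : Λ 2 = lam 1 + lam 2 := by rw [hΛsucc 1, hΛ1]
    have hr : 1 < Λ 2 / lam 2 := by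
      rw [h2, lt_div_iff₀ l2]; linarith
    have := Real.log_pos hr
    linarith
  have hμpos : 0 < μ := lt_of_lt_of_le (Real.exp_pos M) hμ
  -- define the sequence
  let h : ℕ → ℝ := fun n => Nat.rec 0 (fun k hk =>
    (Λ k / Λ (k + 1)) * hk - (Λ k / Λ (k + 1)) *
      Real.log (lam (k + 1) / lam k - (lam (k + 1) / (Λ k * μ)) * Real.exp hk)) n
  have hrec : ∀ k, h (k + 1) = (Λ k / Λ (k + 1)) * h k - (Λ k / Λ (k + 1)) *
      Real.log (lam (k + 1) / lam k - (lam (k + 1) / (Λ k * μ)) * Real.exp (h k)) :=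
    fun k => rfl
  have h1 : h 1 = 0 := by
    rw [show (1 : ℕ) = 0 + 1 from rfl, hrec 0, hΛ0]
    simp
  -- the key algebraic identity
  have hsplit : ∀ k, 1 ≤ k → M * Λ (k - 1) / Λ k = M - M * lam k / Λ k := by
    intro k hk
    have hΛk : 0 < Λ k := hΛpos k hk
    have hΛprev : Λ k = Λ (k - 1) + lam k := by
      have := hΛsucc (k - 1)
      have hk1 : k - 1 + 1 = k := by omega
      rwa [hk1] at this
    rw [eq_sub_iff_add_eq, ← add_div, ← mul_add, ← hΛprev,
      mul_div_assoc, div_self (ne_of_gt hΛk), mul_one]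
  -- key lemma: if h k satisfies the bound, then the argument is ≥ exp(-M*lam k/Λ k)
  have key : ∀ k, 1 ≤ k → h k ≤ M * Λ (k - 1) / Λ k →
      Real.exp (-(M * lam k / Λ k)) ≤
        lam (k + 1) / lam k - (lam (k + 1) / (Λ k * μ)) * Real.exp (h k) := by
    intro k hk hbound
    have hΛk : 0 < Λ k := hΛpos k hk
    have hΛk1 : 0 < Λ (k + 1) := hΛpos (k + 1) (by omega)
    have hlk : 0 < lam k := hlam k hk
    have hlk1 : 0 < lam (k + 1) := hlam (k + 1) (by omega)
    set c : ℝ := M * lam k / Λ k with hc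
    -- h k ≤ M - c
    have hstep1 : h k ≤ M - c := by
      calc h k ≤ M * Λ (k - 1) / Λ k := hbound
        _ = M - c := hsplit k hk
    -- exp(h k)/μ ≤ exp(-c)
    have hstep2 : Real.exp (h k) / μ ≤ Real.exp (-c) := by
      have h1' : Real.exp (h k) ≤ Real.exp (M - c) := Real.exp_le_exp.mpr hstep1
      calc Real.exp (h k) / μ ≤ Real.exp (M - c) / Real.exp M :=
            div_le_div₀ (Real.exp_pos (M - c)).le h1' (Real.exp_pos M) hμ
        _ = Real.exp (-c) := by rw [← Real.exp_sub]; congr 1; ring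
    -- from hM: Λ(k+1)/lam(k+1) ≤ (Λ k/lam k) * exp c
    have hstep3 : Λ (k + 1) / lam (k + 1) ≤ (Λ k / lam k) * Real.exp c := by
      have hMk := hM k hk
      have hrpos : 0 < (Λ (k + 1) / lam (k + 1)) / (Λ k / lam k) :=
        div_pos (div_pos hΛk1 hlk1) (div_pos hΛk hlk)
      have htk : 0 < Λ k / lam k := div_pos hΛk hlk
      have hlog : Real.log ((Λ (k + 1) / lam (k + 1)) / (Λ k / lam k)) ≤ c := by
        rw [hc, ← mul_le_mul_iff_right₀ htk]
        have e : Λ k / lam k * (M * lam k / Λ k) = M := by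
          field_simp
        rw [e]
        exact hMk
      have hle := Real.exp_le_exp.mpr hlog
      rw [Real.exp_log hrpos] at hle
      calc Λ (k + 1) / lam (k + 1)
          = ((Λ (k + 1) / lam (k + 1)) / (Λ k / lam k)) * (Λ k / lam k) := by
            field_simp
        _ ≤ Real.exp c * (Λ k / lam k) :=
            mul_le_mul_of_nonneg_right hle (by positivity)
        _ = (Λ k / lam k) * Real.exp c := by ring
    have hexpc : 0 < Real.exp (-c) := Real.exp_pos _
    have hstep4 : Real.exp (-c) * Λ (k + 1) ≤ lam (k + 1) * Λ k / lam k := by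
      have h' := mul_le_mul_of_nonneg_left hstep3 hexpc.le
      have e2 : Real.exp (-c) * (Λ k / lam k * Real.exp c) = Λ k / lam k := by
        rw [Real.exp_neg]
        field_simp
      rw [e2] at h'
      have h'' := mul_le_mul_of_nonneg_right h' hlk1.le
      have e3 : Real.exp (-c) * (Λ (k + 1) / lam (k + 1)) * lam (k + 1)
          = Real.exp (-c) * Λ (k + 1) := by field_simp
      rw [e3] at h''
      calc Real.exp (-c) * Λ (k + 1) ≤ Λ k / lam k * lam (k + 1) := h''
        _ = lam (k + 1) * Λ k / lam k := by ring
    have hstep5 : Real.exp (-c) ≤ lam (k + 1) / lam k - (lam (k + 1) / Λ k) * Real.exp (-c) := by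
      rw [le_sub_iff_add_le, ← mul_le_mul_iff_left₀ hΛk]
      calc (Real.exp (-c) + lam (k + 1) / Λ k * Real.exp (-c)) * Λ k
          = Real.exp (-c) * (Λ k + lam (k + 1)) := by field_simp
        _ ≤ lam (k + 1) * Λ k / lam k := by rw [← hΛsucc]; exact hstep4
        _ = lam (k + 1) / lam k * Λ k := by ring
    have hstep6 : (lam (k + 1) / (Λ k * μ)) * Real.exp (h k)
        ≤ (lam (k + 1) / Λ k) * Real.exp (-c) := by
      have e4 : (lam (k + 1) / (Λ k * μ)) * Real.exp (h k)
          = (lam (k + 1) / Λ k) * (Real.exp (h k) / μ) := by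
        field_simp
      rw [e4]
      exact mul_le_mul_of_nonneg_left hstep2 (by positivity)
    linarith
  -- main induction
  have main : ∀ k, 1 ≤ k → h k ≤ M * Λ (k - 1) / Λ k := by
    intro k hk
    induction k, hk using Nat.le_induction with
    | base => simp [h1, hΛ0]
    | succ n hn ih =>
      have hkey := key n hn ih
      have hΛn : 0 < Λ n := hΛpos n hn
      have hΛn1 : 0 < Λ (n + 1) := hΛpos (n + 1) (by omega)
      have hlog : -(M * lam n / Λ n) ≤
          Real.log (lam (n + 1) / lam n - (lam (n + 1) / (Λ n * μ)) * Real.exp (h n)) := by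
        have := Real.log_le_log (Real.exp_pos _) hkey
        rwa [Real.log_exp] at this
      have hbnd : h n - Real.log (lam (n + 1) / lam n
          - (lam (n + 1) / (Λ n * μ)) * Real.exp (h n)) ≤ M := by
        have e := hsplit n hn
        linarith [ih, hlog, e ▸ ih]
      rw [hrec n]
      simp only [Nat.add_sub_cancel]
      calc (Λ n / Λ (n + 1)) * h n - (Λ n / Λ (n + 1)) *
            Real.log (lam (n + 1) / lam n - (lam (n + 1) / (Λ n * μ)) * Real.exp (h n))
          = (Λ n / Λ (n + 1)) * (h n - Real.log (lam (n + 1) / lam n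
              - (lam (n + 1) / (Λ n * μ)) * Real.exp (h n))) := by ring
        _ ≤ (Λ n / Λ (n + 1)) * M := mul_le_mul_of_nonneg_left hbnd (by positivity)
        _ = M * Λ n / Λ (n + 1) := by ring
  refine ⟨h, h1, ?_, fun k hk => main k (by omega)⟩
  intro k hk
  have hkey := key k hk (main k hk)
  exact ⟨lt_of_lt_of_le (Real.exp_pos _) hkey, hrec k⟩
end

section
/- As μ → e^M with 0 < μ < e^M, ∫₀^∞ dx/(e^x/μ − x + M − 1) = √2·π·(log(e^M/μ))^{−1/2} + O(1); that is, there exist constants K and δ > 0 such that for all μ with e^M − δ < μ < e^M, |∫₀^∞ dx/(e^x/μ − x + M − 1) − √2 π (M − log μ)^{−1/2}| ≤ K. -/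
open MeasureTheory Real Set


lemma exp_ge_quad {t : ℝ} (h0 : 0 ≤ t) : 1 + t + t^2/2 ≤ exp t := by
  have := Real.sum_le_exp_of_nonneg h0 3
  simp [Finset.sum_range_succ, Nat.factorial] at this
  nlinarith [this]

lemma abs_exp_sub_cubic {t : ℝ} (h0 : 0 ≤ t) (h1 : t ≤ 1) :
    |exp t - (1 + t + t^2/2)| ≤ 2/9 * t^3 := by
  have h := Real.exp_bound (x := t) (by rw [abs_of_nonneg h0]; exact h1) (n := 3) (by norm_num)
  simp [Finset.sum_range_succ, Nat.factorial, abs_of_nonneg h0] at h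
  calc |exp t - (1 + t + t^2/2)| = |exp t - (1 + t + t^2/2)| := rfl
    _ ≤ 2/9 * t^3 := by nlinarith [h, abs_nonneg (exp t - (1 + t + t^2/2))]

lemma abs_exp_neg_sub_cubic {t : ℝ} (h0 : 0 ≤ t) (h1 : t ≤ 1) :
    |exp (-t) - (1 - t + t^2/2)| ≤ 2/9 * t^3 := by
  have h := Real.exp_bound (x := -t) (by rw [abs_neg, abs_of_nonneg h0]; exact h1) (n := 3) (by norm_num)
  simp [Finset.sum_range_succ, Nat.factorial, abs_neg, abs_of_nonneg h0] at h
  have e : 1 + -t + t^2/2 = 1 - t + t^2/2 := by ring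
  rw [e] at h; linarith

lemma abs_exp_sub_quartic {t : ℝ} (h0 : 0 ≤ t) (h1 : t ≤ 1) :
    |exp t - (1 + t + t^2/2 + t^3/6)| ≤ 5/96 * t^4 := by
  have h := Real.exp_bound (x := t) (by rw [abs_of_nonneg h0]; exact h1) (n := 4) (by norm_num)
  simp [Finset.sum_range_succ, Nat.factorial, abs_of_nonneg h0] at h
  linarith

lemma abs_exp_neg_sub_quartic {t : ℝ} (h0 : 0 ≤ t) (h1 : t ≤ 1) :
    |exp (-t) - (1 - t + t^2/2 - t^3/6)| ≤ 5/96 * t^4 := by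
  have h := Real.exp_bound (x := -t) (by rw [abs_neg, abs_of_nonneg h0]; exact h1) (n := 4) (by norm_num)
  simp [Finset.sum_range_succ, Nat.factorial, abs_neg, abs_of_nonneg h0] at h
  have e : 1 + -t + t^2/2 + (-t)^3/6 = 1 - t + t^2/2 - t^3/6 := by ring
  rw [e] at h; linarith


lemma B_lower {M c t : ℝ} (hM : 0 < M) (hc6 : c ≤ 1/6) (hce : c ≤ exp (-2)/4)
    (hcM : c ≤ 1/(2*M)) (ht : 0 ≤ t) (htM : t ≤ M) : c * t^2 ≤ exp (-t) + t - 1 := by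
  rcases le_or_gt t 1 with h1 | h1
  · have h2 := (abs_le.1 (abs_exp_neg_sub_cubic ht h1)).1
    have h4 : t^3 ≤ t^2 := by nlinarith [sq_nonneg t]
    have h5 : c * t^2 ≤ (1/6) * t^2 := mul_le_mul_of_nonneg_right hc6 (sq_nonneg t)
    nlinarith
  rcases le_or_gt t 2 with h2 | h2
  · have he : exp (-2) ≤ exp (-t) := exp_le_exp.2 (by linarith)
    have h5 : c * t^2 ≤ (exp (-2)/4) * 4 := by
      have h6 : t^2 ≤ 4 := by nlinarith
      nlinarith [sq_nonneg t, exp_pos (-2)]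
    nlinarith
  · have h5 : c * t^2 ≤ (1/(2*M)) * t^2 := mul_le_mul_of_nonneg_right hcM (sq_nonneg t)
    have h4 : (1/(2*M)) * t^2 ≤ t/2 := by
      rw [div_mul_eq_mul_div, div_le_div_iff₀ (by positivity) (by norm_num)]
      nlinarith
    nlinarith [exp_pos (-t)]

lemma A_lower {c t : ℝ} (hc1 : c ≤ 1/2) (ht : 0 ≤ t) : c * t^2 ≤ exp t - t - 1 := by
  have := exp_ge_quad ht
  have h5 : c * t^2 ≤ (1/2) * t^2 := mul_le_mul_of_nonneg_right hc1 (sq_nonneg t)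
  nlinarith

lemma num_bound_small {ε t a b : ℝ} (hε : 0 < ε) (ht : 0 ≤ t) (h1 : t ≤ 1)
    (hab : |a + b| ≤ 5/48 * t^4) (haa : |a| ≤ 2/9 * t^3) (hbb : |b| ≤ 2/9 * t^3) :
    |(t^2/2)*(a+b) + 2*a*b + ε*(a+b)| ≤ 1 * (t^6 + ε*t^4) := by
  have tri : |(t^2/2)*(a+b) + 2*a*b + ε*(a+b)| ≤
      (t^2/2) * |a+b| + 2 * (|a| * |b|) + ε * |a+b| := by
    calc |(t^2/2)*(a+b) + 2*a*b + ε*(a+b)|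
        ≤ |(t^2/2)*(a+b)| + |2*a*b| + |ε*(a+b)| := abs_add_three _ _ _
      _ = (t^2/2) * |a+b| + 2 * (|a| * |b|) + ε * |a+b| := by
          rw [abs_mul, abs_mul, abs_mul, abs_mul,
            abs_of_nonneg (show (0:ℝ) ≤ t^2/2 by positivity),
            abs_of_nonneg hε.le]
          norm_num [mul_assoc]
  have step : (t^2/2) * |a+b| + 2 * (|a| * |b|) + ε * |a+b|
      ≤ (t^2/2)*(5/48*t^4) + 2*((2/9*t^3)*(2/9*t^3)) + ε*(5/48*t^4) := by
    gcongr <;> exact abs_nonneg _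
  have fin : (t^2/2)*(5/48*t^4) + 2*((2/9*t^3)*(2/9*t^3)) + ε*(5/48*t^4)
      ≤ 1 * (t^6 + ε*t^4) := by
    nlinarith [pow_nonneg ht 6, mul_nonneg hε.le (pow_nonneg ht 4)]
  linarith

lemma num_bound_large {M ε t a b : ℝ} (hM : 0 < M) (hε : 0 < ε) (hε1 : ε ≤ 1)
    (h1 : 1 ≤ t) (htM : t ≤ M) (ha0 : 0 ≤ a) (haM : a ≤ exp M)
    (hbabs : |b| ≤ 1 + M + M^2/2) :
    |(t^2/2)*(a+b) + 2*a*b + ε*(a+b)|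
      ≤ (exp M + 1 + M + M^2/2) * (M^2/2 + 2*exp M + 1) + 1 := by
  have habs_a : |a| = a := abs_of_nonneg ha0
  have tri : |(t^2/2)*(a+b) + 2*a*b + ε*(a+b)| ≤
      (t^2/2) * |a+b| + 2 * (|a| * |b|) + ε * |a+b| := by
    calc |(t^2/2)*(a+b) + 2*a*b + ε*(a+b)|
        ≤ |(t^2/2)*(a+b)| + |2*a*b| + |ε*(a+b)| := abs_add_three _ _ _
      _ = (t^2/2) * |a+b| + 2 * (|a| * |b|) + ε * |a+b| := by
          rw [abs_mul, abs_mul, abs_mul, abs_mul,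
            abs_of_nonneg (show (0:ℝ) ≤ t^2/2 by positivity),
            abs_of_nonneg hε.le]
          norm_num [mul_assoc]
  have hab : |a + b| ≤ exp M + 1 + M + M^2/2 := by
    calc |a+b| ≤ |a| + |b| := abs_add_le _ _
      _ ≤ exp M + (1 + M + M^2/2) := by rw [habs_a]; linarith
      _ = _ := by ring
  have e1 : (t^2/2) * |a+b| ≤ (M^2/2) * (exp M + 1 + M + M^2/2) := by
    have h2 : t^2/2 ≤ M^2/2 := by nlinarith
    have h3 := abs_nonneg (a+b)
    nlinarith
  have e2 : 2 * (|a| * |b|) ≤ 2 * exp M * (1 + M + M^2/2) := by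
    rw [habs_a]
    nlinarith [abs_nonneg b, exp_pos M]
  have e3 : ε * |a+b| ≤ 1 * (exp M + 1 + M + M^2/2) := by
    nlinarith [abs_nonneg (a+b)]
  nlinarith [exp_pos M]


set_option maxHeartbeats 2000000 in
lemma core_bound (M : ℝ) (hM : 0 < M) : ∃ C : ℝ, 0 < C ∧ ∀ ε t : ℝ, 0 < ε → ε ≤ 1 → 0 ≤ t → t ≤ M →
    |(exp t - t - 1 + ε)⁻¹ + (exp (-t) + t - 1 + ε)⁻¹ - 2 * (t^2/2 + ε)⁻¹| ≤ C := by
  obtain ⟨c, hcdef⟩ : ∃ c : ℝ, c = min (1/6) (min (exp (-2)/4) (1/(2*M))) := ⟨_, rfl⟩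
  have hc0 : 0 < c := hcdef ▸ lt_min (by norm_num) (lt_min (by positivity) (by positivity))
  have hc1 : c ≤ 1/2 := hcdef ▸ le_trans (min_le_left _ _) (by norm_num)
  have hc6 : c ≤ 1/6 := hcdef ▸ min_le_left _ _
  have hce : c ≤ exp (-2)/4 := hcdef ▸ le_trans (min_le_right _ _) (min_le_left _ _)
  have hcM : c ≤ 1/(2*M) := hcdef ▸ le_trans (min_le_right _ _) (min_le_right _ _)
  obtain ⟨CN, hCN⟩ : ∃ CN : ℝ, CN = (exp M + 1 + M + M^2/2) * (M^2/2 + 2*exp M + 1) + 1 := ⟨_, rfl⟩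
  have hCN1 : 1 ≤ CN := by
    rw [hCN]
    nlinarith [mul_pos (show (0:ℝ) < exp M + 1 + M + M^2/2 by positivity)
      (show (0:ℝ) < M^2/2 + 2*exp M + 1 by positivity)]
  refine ⟨CN / c^3, by positivity, ?_⟩
  intro ε t hε hε1 ht htM
  obtain ⟨A, hA⟩ : ∃ A : ℝ, A = exp t - t - 1 := ⟨_, rfl⟩
  obtain ⟨B, hB⟩ : ∃ B : ℝ, B = exp (-t) + t - 1 := ⟨_, rfl⟩
  obtain ⟨a, ha⟩ : ∃ a : ℝ, a = A - t^2/2 := ⟨_, rfl⟩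
  obtain ⟨b, hb⟩ : ∃ b : ℝ, b = B - t^2/2 := ⟨_, rfl⟩
  rw [show exp t - t - 1 + ε = A + ε by rw [hA], show exp (-t) + t - 1 + ε = B + ε by rw [hB]]
  have hBc : c * t^2 ≤ B := hB ▸ B_lower hM hc6 hce hcM ht htM
  have hAc : c * t^2 ≤ A := hA ▸ A_lower hc1 ht
  -- numerator bound
  have hnum : |(t^2/2)*(a+b) + 2*a*b + ε*(a+b)| ≤ CN * (t^6 + ε*t^4) := by
    rcases le_or_gt t 1 with h1 | h1
    · have hab : |a + b| ≤ 5/48 * t^4 := by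
        have q1 := abs_exp_sub_quartic ht h1
        have q2 := abs_exp_neg_sub_quartic ht h1
        have e : a + b = (exp t - (1 + t + t^2/2 + t^3/6)) + (exp (-t) - (1 - t + t^2/2 - t^3/6)) := by
          rw [ha, hb, hA, hB]; ring
        rw [e]
        calc _ ≤ |exp t - (1 + t + t^2/2 + t^3/6)| + |exp (-t) - (1 - t + t^2/2 - t^3/6)| := abs_add_le _ _
          _ ≤ 5/48 * t^4 := by linarith
      have haa : |a| ≤ 2/9 * t^3 := by
        have e : a = exp t - (1 + t + t^2/2) := by rw [ha, hA]; ring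
        rw [e]; exact abs_exp_sub_cubic ht h1
      have hbb : |b| ≤ 2/9 * t^3 := by
        have e : b = exp (-t) - (1 - t + t^2/2) := by rw [hb, hB]; ring
        rw [e]; exact abs_exp_neg_sub_cubic ht h1
      have h0 : (0:ℝ) ≤ t^6 + ε*t^4 := by positivity
      calc |(t^2/2)*(a+b) + 2*a*b + ε*(a+b)| ≤ 1 * (t^6 + ε*t^4) :=
            num_bound_small hε ht h1 hab haa hbb
        _ ≤ CN * (t^6 + ε*t^4) := by nlinarith
    · have ha0 : 0 ≤ a := by rw [ha, hA]; have := exp_ge_quad ht; nlinarith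
      have haM : a ≤ exp M := by
        have h2 : exp t ≤ exp M := exp_le_exp.2 htM
        rw [ha, hA]; nlinarith [sq_nonneg t]
      have hbabs : |b| ≤ 1 + M + M^2/2 := by
        have h2 : exp (-t) ≤ 1 := exp_le_one_iff.2 (by linarith)
        rw [hb, hB, abs_le]
        constructor <;> nlinarith [exp_pos (-t), sq_nonneg t]
      have ht6 : 1 ≤ t^6 := by nlinarith [pow_nonneg ht 3, sq_nonneg (t^3 - 1), sq_nonneg (t-1)]
      have h0 : (0:ℝ) ≤ ε*t^4 := by positivity
      calc |(t^2/2)*(a+b) + 2*a*b + ε*(a+b)| ≤ CN :=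
            hCN ▸ num_bound_large hM hε hε1 h1.le htM ha0 haM hbabs
        _ ≤ CN * (t^6 + ε*t^4) := by nlinarith
  -- denominators
  have hq0 : (0:ℝ) < t^2/2 + ε := by positivity
  have hA0 : (0:ℝ) < A + ε := by nlinarith [mul_nonneg hc0.le (sq_nonneg t)]
  have hB0 : (0:ℝ) < B + ε := by nlinarith [mul_nonneg hc0.le (sq_nonneg t)]
  have hden : c^3 * (t^2 + ε)^3 ≤ (A + ε) * ((B + ε) * (t^2/2 + ε)) := by
    have l1 : c * (t^2 + ε) ≤ A + ε := by nlinarith [sq_nonneg t]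
    have l2 : c * (t^2 + ε) ≤ B + ε := by nlinarith [sq_nonneg t]
    have l3 : c * (t^2 + ε) ≤ t^2/2 + ε := by nlinarith [sq_nonneg t]
    have hp : (0:ℝ) ≤ c * (t^2 + ε) := by positivity
    calc c^3 * (t^2+ε)^3 = (c*(t^2+ε)) * ((c*(t^2+ε)) * (c*(t^2+ε))) := by ring
      _ ≤ (A + ε) * ((B + ε) * (t^2/2 + ε)) :=
          mul_le_mul l1 (mul_le_mul l2 l3 hp (by linarith)) (by positivity) hA0.le
  -- identity
  have hid : (A + ε)⁻¹ + (B + ε)⁻¹ - 2 * (t^2/2 + ε)⁻¹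
      = -((t^2/2)*(a+b) + 2*a*b + ε*(a+b)) / ((A + ε) * ((B + ε) * (t^2/2 + ε))) := by
    rw [ha, hb]
    field_simp
    ring
  rw [hid, abs_div, abs_neg,
    abs_of_pos (show (0:ℝ) < (A + ε) * ((B + ε) * (t^2/2 + ε)) by positivity),
    div_le_div_iff₀ (by positivity) (by positivity)]
  have h1 : t^6 + ε*t^4 ≤ (t^2 + ε)^3 := by
    nlinarith [mul_nonneg (mul_nonneg hε.le hε.le) (sq_nonneg t), pow_nonneg ht 4,
      mul_nonneg hε.le (mul_nonneg hε.le hε.le)]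
  calc |(t^2/2)*(a+b) + 2*a*b + ε*(a+b)| * c^3 ≤ (CN * (t^6 + ε*t^4)) * c^3 :=
        mul_le_mul_of_nonneg_right hnum (by positivity)
    _ = CN * (c^3 * (t^6 + ε*t^4)) := by ring
    _ ≤ CN * ((A + ε) * ((B + ε) * (t^2/2 + ε))) := by
        apply mul_le_mul_of_nonneg_left _ (by linarith)
        calc c^3 * (t^6 + ε*t^4) ≤ c^3 * (t^2+ε)^3 :=
              mul_le_mul_of_nonneg_left h1 (by positivity)
          _ ≤ _ := hden

lemma integral_Ioi_comp_sub (f : ℝ → ℝ) (a L : ℝ) :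
    ∫ x in Set.Ioi a, f (x - L) = ∫ t in Set.Ioi (a - L), f t := by
  have A : MeasurableEmbedding (fun x : ℝ => x - L) :=
    (Homeomorph.subRight L).isClosedEmbedding.measurableEmbedding
  have h := A.setIntegral_map (μ := volume) f (Set.Ioi (a - L))
  have hmap : Measure.map (fun x : ℝ => x - L) volume = volume := by
    simp_rw [sub_eq_add_neg]
    exact MeasureTheory.Measure.IsAddRightInvariant.map_add_right_eq_self (-L)
  have hpre : (fun x : ℝ => x - L) ⁻¹' (Set.Ioi (a - L)) = Set.Ioi a := by
    ext x
    simp [sub_lt_sub_iff_right]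
  rw [hmap, hpre] at h
  exact h.symm

lemma integral_q (ε : ℝ) (hε : 0 < ε) :
    ∫ t : ℝ, (t^2/2 + ε)⁻¹ = Real.sqrt 2 * π * ε ^ (-(1/2) : ℝ) := by
  have hσ : (0:ℝ) < Real.sqrt (2*ε) := Real.sqrt_pos.2 (by positivity)
  have key : ∀ t : ℝ, (t^2/2 + ε)⁻¹ = ε⁻¹ * (1 + ((Real.sqrt (2*ε))⁻¹ * t)^2)⁻¹ := by
    intro t
    have h2 : ((Real.sqrt (2*ε))⁻¹ * t)^2 = t^2/(2*ε) := by
      rw [mul_pow, inv_pow, Real.sq_sqrt (by positivity)]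
      ring
    rw [h2]
    rw [show (1 : ℝ) + t^2/(2*ε) = (t^2/2 + ε)/ε by field_simp; ring]
    field_simp
  simp_rw [key]
  rw [MeasureTheory.integral_const_mul, MeasureTheory.Measure.integral_comp_mul_left
    (fun u => (1 + u^2)⁻¹) ((Real.sqrt (2*ε))⁻¹), integral_univ_inv_one_add_sq]
  rw [inv_inv, abs_of_pos hσ, smul_eq_mul]
  rw [Real.sqrt_mul (by norm_num) ε, Real.rpow_neg hε.le, ← Real.sqrt_eq_rpow]
  have hsε : Real.sqrt ε > 0 := Real.sqrt_pos.2 hε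
  have h3 : Real.sqrt ε * Real.sqrt ε = ε := Real.mul_self_sqrt hε.le
  field_simp
  linear_combination h3

lemma tail_bound {L : ℝ} (hL : 0 < L) (f : ℝ → ℝ) (hf_cont : Continuous f)
    (h0 : ∀ t, 0 ≤ f t) (hmaj : ∀ t, L < t → f t ≤ 2/t^2) :
    IntegrableOn f (Ioi L) ∧ |∫ t in Ioi L, f t| ≤ 2/L := by
  have hrp : IntegrableOn (fun t : ℝ => t ^ (-2 : ℝ)) (Ioi L) :=
    integrableOn_Ioi_rpow_of_lt (by norm_num) hL
  have hmaj' : ∀ t ∈ Ioi L, f t ≤ 2 * t ^ (-2 : ℝ) := by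
    intro t ht
    have ht0 : 0 < t := lt_trans hL ht
    have : t ^ (-2 : ℝ) = (t^2)⁻¹ := by
      rw [Real.rpow_neg ht0.le, show (2:ℝ) = ((2:ℕ):ℝ) by norm_num, Real.rpow_natCast]
    rw [this]
    have := hmaj t ht
    rw [div_eq_mul_inv] at this
    exact this
  have hint : IntegrableOn f (Ioi L) := by
    apply Integrable.mono' (hrp.const_mul 2) (hf_cont.aestronglyMeasurable.restrict)
    filter_upwards [ae_restrict_mem measurableSet_Ioi] with t ht
    rw [Real.norm_eq_abs, abs_of_nonneg (h0 t)]
    exact hmaj' t ht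
  refine ⟨hint, ?_⟩
  have hval : ∫ t in Ioi L, 2 * t ^ (-2 : ℝ) = 2 / L := by
    rw [MeasureTheory.integral_const_mul, integral_Ioi_rpow_of_lt (by norm_num) hL]
    rw [show (-2 : ℝ) + 1 = -1 by norm_num, Real.rpow_neg_one]
    field_simp
  have hle : ∫ t in Ioi L, f t ≤ 2 / L := by
    rw [← hval]
    apply setIntegral_mono_on hint (hrp.const_mul 2) measurableSet_Ioi hmaj'
  have hge : 0 ≤ ∫ t in Ioi L, f t := setIntegral_nonneg measurableSet_Ioi (fun t _ => h0 t)
  rw [abs_of_nonneg hge]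
  exact hle

lemma q_integrable {ε : ℝ} (hε : 0 < ε) : Integrable (fun t : ℝ => (t^2/2 + ε)⁻¹) := by
  have hc : Continuous (fun t : ℝ => (t^2/2 + ε)⁻¹) := by
    apply Continuous.inv₀ (by continuity)
    intro t; positivity
  set cm : ℝ := min (1/2) ε with hcm
  have hcm0 : 0 < cm := lt_min (by norm_num) hε
  apply Integrable.mono' (integrable_inv_one_add_sq.const_mul cm⁻¹) hc.aestronglyMeasurable
  filter_upwards with t
  rw [Real.norm_eq_abs, abs_of_nonneg (by positivity)]
  rw [← mul_inv]
  apply inv_anti₀ (by positivity)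
  have h1 : cm ≤ 1/2 := min_le_left _ _
  have h2 : cm ≤ ε := min_le_right _ _
  nlinarith [sq_nonneg t, hcm0]


set_option maxHeartbeats 1000000 in
theorem integral_asymptotic (M : ℝ) (hM : 0 < M) :
    ∃ K δ : ℝ, 0 < δ ∧ ∀ μ : ℝ, Real.exp M - δ < μ → μ < Real.exp M →
      |(∫ x in Set.Ioi (0 : ℝ), 1 / (Real.exp x / μ - x + M - 1))
          - Real.sqrt 2 * Real.pi * (M - Real.log μ) ^ (-(1 / 2) : ℝ)| ≤ K := by
  obtain ⟨C, hC0, hC⟩ := core_bound M hM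
  set m : ℝ := min 1 (M/2) with hm
  have hm0 : 0 < m := lt_min one_pos (by positivity)
  have hm1 : m ≤ 1 := min_le_left _ _
  have hm2 : m ≤ M/2 := min_le_right _ _
  refine ⟨C * M + 12/M, exp M - exp (M - m), by
    have h1 : M - m < M := by linarith
    have h2 := exp_lt_exp.2 h1
    linarith, ?_⟩
  intro μ hμ1 hμ2
  have hμpos : 0 < μ := lt_trans (by positivity : (0:ℝ) < exp (M - m)) (by linarith)
  set L : ℝ := Real.log μ with hLdef
  have hexpL : exp L = μ := Real.exp_log hμpos
  have hL1 : M - m < L := (Real.lt_log_iff_exp_lt hμpos).2 (by linarith)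
  have hL2 : L < M := (Real.log_lt_iff_lt_exp hμpos).2 hμ2
  set ε : ℝ := M - L with hεdef
  have hε0 : 0 < ε := by rw [hεdef]; linarith
  have hε1 : ε ≤ 1 := by rw [hεdef]; linarith
  have hLM2 : M/2 ≤ L := by linarith
  have hL0 : 0 < L := by linarith
  have hLL : -L ≤ L := by linarith
  -- positivity and continuity
  have hgpos : ∀ t : ℝ, 0 < exp t - t - 1 + ε := by
    intro t
    have := Real.add_one_le_exp t
    linarith
  have hφcont : Continuous (fun t : ℝ => (exp t - t - 1 + ε)⁻¹) :=
    Continuous.inv₀ (((Real.continuous_exp.sub continuous_id).sub continuous_const).add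
      continuous_const) (fun t => (hgpos t).ne')
  have hqpos : ∀ t : ℝ, 0 < t^2/2 + ε := fun t => by positivity
  have hqcont : Continuous (fun t : ℝ => (t^2/2 + ε)⁻¹) :=
    Continuous.inv₀ (((continuous_pow 2).div_const 2).add continuous_const)
      (fun t => (hqpos t).ne')
  -- rewrite integrand and translate
  have hint : (∫ x in Set.Ioi (0:ℝ), 1 / (Real.exp x / μ - x + M - 1))
      = ∫ t in Set.Ioi (-L), (exp t - t - 1 + ε)⁻¹ := by
    have h2 := integral_Ioi_comp_sub (fun t => (exp t - t - 1 + ε)⁻¹) 0 L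
    simp only [zero_sub] at h2
    rw [← h2]
    apply setIntegral_congr_fun measurableSet_Ioi
    intro x _
    show 1 / (Real.exp x / μ - x + M - 1) = (exp (x - L) - (x - L) - 1 + ε)⁻¹
    rw [one_div, ← hexpL, ← Real.exp_sub]
    congr 1
    rw [hεdef]
    ring
  -- tail bounds
  obtain ⟨hφtail_int, hφtail⟩ := tail_bound hL0 (fun t => (exp t - t - 1 + ε)⁻¹) hφcont
    (fun t => inv_nonneg.2 (hgpos t).le)
    (by
      intro t ht
      have ht0 : 0 < t := lt_trans hL0 ht
      have h1 := A_lower (le_refl (1/2)) ht0.le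
      have h2 : t^2/2 ≤ exp t - t - 1 + ε := by linarith
      rw [show (2:ℝ)/t^2 = (t^2/2)⁻¹ by field_simp]
      exact inv_anti₀ (by positivity) h2)
  obtain ⟨hqtail_int, hqtail⟩ := tail_bound hL0 (fun t => (t^2/2 + ε)⁻¹) hqcont
    (fun t => inv_nonneg.2 (hqpos t).le)
    (by
      intro t ht
      have ht0 : 0 < t := lt_trans hL0 ht
      have h2 : t^2/2 ≤ t^2/2 + ε := by linarith
      rw [show (2:ℝ)/t^2 = (t^2/2)⁻¹ by field_simp]
      exact inv_anti₀ (by positivity) h2)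
  have hqint : Integrable (fun t : ℝ => (t^2/2 + ε)⁻¹) := q_integrable hε0
  -- left tail of q
  have hqleft : (∫ t in Iic (-L), (t^2/2 + ε)⁻¹) = ∫ t in Ioi L, (t^2/2 + ε)⁻¹ := by
    calc (∫ t in Iic (-L), (t^2/2 + ε)⁻¹)
        = ∫ t in Iic (-L), (fun y : ℝ => (y^2/2 + ε)⁻¹) (-t) := by
          apply setIntegral_congr_fun measurableSet_Iic
          intro x _
          simp [neg_sq]
      _ = ∫ t in Ioi (-(-L)), (t^2/2 + ε)⁻¹ := integral_comp_neg_Iic (-L) (fun y : ℝ => (y^2/2 + ε)⁻¹)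
      _ = ∫ t in Ioi L, (t^2/2 + ε)⁻¹ := by rw [neg_neg]
  -- splits
  have hφIoc : IntegrableOn (fun t : ℝ => (exp t - t - 1 + ε)⁻¹) (Ioc (-L) L) :=
    hφcont.integrableOn_Ioc
  have hqIoc : IntegrableOn (fun t : ℝ => (t^2/2 + ε)⁻¹) (Ioc (-L) L) :=
    hqcont.integrableOn_Ioc
  have hsplitφ : (∫ t in Set.Ioi (-L), (exp t - t - 1 + ε)⁻¹)
      = (∫ t in Ioc (-L) L, (exp t - t - 1 + ε)⁻¹) + ∫ t in Ioi L, (exp t - t - 1 + ε)⁻¹ := by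
    rw [← setIntegral_union (Set.Ioc_disjoint_Ioi le_rfl) measurableSet_Ioi hφIoc hφtail_int,
      Set.Ioc_union_Ioi_eq_Ioi hLL]
  have hsplitq : (∫ t : ℝ, (t^2/2 + ε)⁻¹)
      = (∫ t in Iic (-L), (t^2/2 + ε)⁻¹)
        + ((∫ t in Ioc (-L) L, (t^2/2 + ε)⁻¹) + ∫ t in Ioi L, (t^2/2 + ε)⁻¹) := by
    rw [← setIntegral_union (Set.Ioc_disjoint_Ioi le_rfl) measurableSet_Ioi hqIoc hqtail_int,
      Set.Ioc_union_Ioi_eq_Ioi hLL,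
      intervalIntegral.integral_Iic_add_Ioi hqint.integrableOn hqint.integrableOn]
  -- pairing
  have hφiv : ∀ a b : ℝ, IntervalIntegrable (fun t : ℝ => (exp t - t - 1 + ε)⁻¹) volume a b :=
    fun a b => hφcont.intervalIntegrable a b
  have hφniv : ∀ a b : ℝ, IntervalIntegrable (fun t : ℝ => (exp (-t) + t - 1 + ε)⁻¹) volume a b := by
    intro a b
    apply Continuous.intervalIntegrable
    apply Continuous.inv₀
    · exact ((Real.continuous_exp.comp continuous_neg).add continuous_id).sub
        continuous_const |>.add continuous_const
    · intro t
      have := hgpos (-t)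
      have e : exp (-t) - (-t) - 1 + ε = exp (-t) + t - 1 + ε := by ring
      rw [e] at this
      exact this.ne'
  have hqiv : ∀ a b : ℝ, IntervalIntegrable (fun t : ℝ => (t^2/2 + ε)⁻¹) volume a b :=
    fun a b => hqcont.intervalIntegrable a b
  have hφpair : (∫ t in Ioc (-L) L, (exp t - t - 1 + ε)⁻¹)
      = (∫ t in (0:ℝ)..L, (exp (-t) + t - 1 + ε)⁻¹) + ∫ t in (0:ℝ)..L, (exp t - t - 1 + ε)⁻¹ := by
    rw [← intervalIntegral.integral_of_le hLL,
      ← intervalIntegral.integral_add_adjacent_intervals (hφiv (-L) 0) (hφiv 0 L)]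
    congr 1
    have e := intervalIntegral.integral_comp_neg (a := (0:ℝ)) (b := L)
      (fun t : ℝ => (exp t - t - 1 + ε)⁻¹)
    rw [neg_zero] at e
    rw [← e]
    apply intervalIntegral.integral_congr
    intro x _
    simp only [sub_neg_eq_add]
  have hqpair : (∫ t in Ioc (-L) L, (t^2/2 + ε)⁻¹)
      = (∫ t in (0:ℝ)..L, (t^2/2 + ε)⁻¹) + ∫ t in (0:ℝ)..L, (t^2/2 + ε)⁻¹ := by
    rw [← intervalIntegral.integral_of_le hLL,
      ← intervalIntegral.integral_add_adjacent_intervals (hqiv (-L) 0) (hqiv 0 L)]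
    congr 1
    have e := intervalIntegral.integral_comp_neg (a := (0:ℝ)) (b := L)
      (fun t : ℝ => (t^2/2 + ε)⁻¹)
    rw [neg_zero] at e
    rw [← e]
    apply intervalIntegral.integral_congr
    intro x _
    simp [neg_sq]
  have hpair : (∫ t in Ioc (-L) L, (exp t - t - 1 + ε)⁻¹) - (∫ t in Ioc (-L) L, (t^2/2 + ε)⁻¹)
      = ∫ t in (0:ℝ)..L, ((exp t - t - 1 + ε)⁻¹ + (exp (-t) + t - 1 + ε)⁻¹ - 2*(t^2/2 + ε)⁻¹) := by
    rw [hφpair, hqpair]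
    rw [intervalIntegral.integral_sub ((hφiv 0 L).add (hφniv 0 L))
      ((hqiv 0 L).const_mul 2), intervalIntegral.integral_add (hφiv 0 L) (hφniv 0 L),
      intervalIntegral.integral_const_mul]
    ring
  -- bound on the paired integral
  have hDb : |∫ t in (0:ℝ)..L, ((exp t - t - 1 + ε)⁻¹ + (exp (-t) + t - 1 + ε)⁻¹
      - 2*(t^2/2 + ε)⁻¹)| ≤ C * L := by
    have hb := intervalIntegral.norm_integral_le_of_norm_le_const (C := C) (a := (0:ℝ)) (b := L)
      (f := fun t => (exp t - t - 1 + ε)⁻¹ + (exp (-t) + t - 1 + ε)⁻¹ - 2*(t^2/2 + ε)⁻¹)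
      (by
        intro x hx
        rw [Set.uIoc_of_le hL0.le] at hx
        rw [Real.norm_eq_abs]
        have := hC ε x hε0 hε1 hx.1.le (le_trans hx.2 hL2.le)
        simpa using this)
    rw [Real.norm_eq_abs] at hb
    calc |∫ t in (0:ℝ)..L, ((exp t - t - 1 + ε)⁻¹ + (exp (-t) + t - 1 + ε)⁻¹ - 2*(t^2/2 + ε)⁻¹)|
        ≤ C * |L - 0| := hb
      _ = C * L := by rw [sub_zero, abs_of_pos hL0]
  -- assemble
  rw [hint, ← integral_q ε hε0, hsplitφ, hsplitq, hqleft]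
  have e : (∫ t in Ioc (-L) L, (exp t - t - 1 + ε)⁻¹) + (∫ t in Ioi L, (exp t - t - 1 + ε)⁻¹)
      - ((∫ t in Ioi L, (t^2/2 + ε)⁻¹) + ((∫ t in Ioc (-L) L, (t^2/2 + ε)⁻¹) + ∫ t in Ioi L, (t^2/2 + ε)⁻¹))
      = ((∫ t in Ioc (-L) L, (exp t - t - 1 + ε)⁻¹) - (∫ t in Ioc (-L) L, (t^2/2 + ε)⁻¹))
        + ((∫ t in Ioi L, (exp t - t - 1 + ε)⁻¹) - (∫ t in Ioi L, (t^2/2 + ε)⁻¹))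
        - (∫ t in Ioi L, (t^2/2 + ε)⁻¹) := by ring
  rw [e, hpair]
  have hY : |(∫ t in Ioi L, (exp t - t - 1 + ε)⁻¹) - (∫ t in Ioi L, (t^2/2 + ε)⁻¹)|
      ≤ 2/L + 2/L := le_trans (abs_sub _ _) (add_le_add hφtail hqtail)
  have habs : |(∫ t in (0:ℝ)..L, ((exp t - t - 1 + ε)⁻¹ + (exp (-t) + t - 1 + ε)⁻¹ - 2*(t^2/2 + ε)⁻¹))
        + ((∫ t in Ioi L, (exp t - t - 1 + ε)⁻¹) - (∫ t in Ioi L, (t^2/2 + ε)⁻¹))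
        - (∫ t in Ioi L, (t^2/2 + ε)⁻¹)|
      ≤ |(∫ t in (0:ℝ)..L, ((exp t - t - 1 + ε)⁻¹ + (exp (-t) + t - 1 + ε)⁻¹ - 2*(t^2/2 + ε)⁻¹))|
        + |(∫ t in Ioi L, (exp t - t - 1 + ε)⁻¹) - (∫ t in Ioi L, (t^2/2 + ε)⁻¹)|
        + |∫ t in Ioi L, (t^2/2 + ε)⁻¹| :=
    le_trans (abs_sub _ _) (add_le_add_left (abs_add_le _ _) _)
  have h1 : C * L ≤ C * M := by nlinarith
  have h3 : (2:ℝ)/L + 2/L + 2/L ≤ 12/M := by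
    have e8 : (2:ℝ)/L + 2/L + 2/L = 6/L := by ring
    rw [e8, div_le_div_iff₀ hL0 hM]
    linarith
  linarith [habs, hDb, hY, hqtail]
end
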